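/- arXiv:1503.06064 — 6 statements merged into one kernel-verified Lean document; each statement's English description precedes it below -/
import Mathlib

section
/- Let Ṽ : C(S^{n-1})⁺ → [0,∞) be a positive radial continuous valuation with Ṽ(0) = 0. Then μ_V* is an outer measure on S^{n-1}: μ_V*(∅) = 0; μ_V*(A) ≤ μ_V*(B) whenever A ⊆ B ⊆ S^{n-1}; and μ_V*(⋃_{i∈ℕ} A_i) ≤ Σ_{i∈ℕ} μ_V*(A_i) for every sequence (A_i)_{i∈ℕ} of subsets of S^{n-1}. -/
open MeasureTheory Metric Set
open scoped ENNReal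

noncomputable section

/-- The unit sphere `S^{n-1}` in `ℝ^n`. -/
abbrev Sph (n : ℕ) := Metric.sphere (0 : EuclideanSpace ℝ (Fin n)) 1

/-- The Lebesgue (rotation-invariant surface) measure `m` on the unit sphere `S^{n-1}`. -/
def sphMeasure (n : ℕ) : Measure (Sph n) :=
  (volume : Measure (EuclideanSpace ℝ (Fin n))).toSphere

/-- The self-map of the sphere `S^{n-1}` induced by a linear isometry of `ℝ^n`. -/
def rotMap {n : ℕ} (φ : EuclideanSpace ℝ (Fin n) ≃ₗᵢ[ℝ] EuclideanSpace ℝ (Fin n)) :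
    C(Sph n, Sph n) where
  toFun x := ⟨φ x, by
    have hx := x.2
    simp only [mem_sphere_iff_norm, sub_zero] at hx ⊢
    simp [φ.norm_map, hx]⟩
  continuous_toFun := by
    apply Continuous.subtype_mk
    exact φ.continuous.comp continuous_subtype_val

/-- A rotation of `S^{n-1}`: a linear isometry of `ℝ^n` with determinant `1`, i.e. the
restriction of an element of `SO(n)`. -/
def IsRotation {n : ℕ} (φ : EuclideanSpace ℝ (Fin n) ≃ₗᵢ[ℝ] EuclideanSpace ℝ (Fin n)) : Prop :=
  LinearMap.det (φ.toLinearEquiv : EuclideanSpace ℝ (Fin n) →ₗ[ℝ] EuclideanSpace ℝ (Fin n)) = 1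

/-- The outer measure `μ_{V,λ}*` associated to a valuation `V` on `C(S^{n-1})⁺`:
for open `G`, `μ_{V,λ}*(G) = sup{V(f) : f : S^{n-1} → [0,λ] continuous, supp f ⊆ G}`,
and for arbitrary `A`, `μ_{V,λ}*(A) = inf{μ_{V,λ}*(G) : G open, A ⊆ G}`. -/
def muStar {n : ℕ} (V : C(Sph n, ℝ) → ℝ) (lam : ℝ) (A : Set (Sph n)) : ℝ≥0∞ :=
  ⨅ (G : Set (Sph n)) (_ : IsOpen G) (_ : A ⊆ G),
    ⨆ (f : C(Sph n, ℝ)) (_ : ∀ x, f x ∈ Set.Icc 0 lam) (_ : tsupport ⇑f ⊆ G),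
      ENNReal.ofReal (V f)

/-- The inner supremum in the definition of `μ_{V,1}*`. -/
def sval {n : ℕ} (V : C(Sph n, ℝ) → ℝ) (G : Set (Sph n)) : ℝ≥0∞ :=
  ⨆ (f : C(Sph n, ℝ)) (_ : ∀ x, f x ∈ Set.Icc (0:ℝ) 1) (_ : tsupport ⇑f ⊆ G),
    ENNReal.ofReal (V f)

lemma muStar_eq {n : ℕ} (V : C(Sph n, ℝ) → ℝ) (A : Set (Sph n)) :
    muStar V 1 A = ⨅ (G : Set (Sph n)) (_ : IsOpen G) (_ : A ⊆ G), sval V G := rfl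

lemma fold_sup_apply {n : ℕ} (t : Finset ℕ) (g : ℕ → C(Sph n, ℝ)) (x : Sph n) :
    (Finset.fold (β := C(Sph n, ℝ)) (· ⊔ ·) 0 g t) x = t.fold max 0 (fun i => g i x) := by
  induction t using Finset.cons_induction with
  | empty => simp
  | cons a s ha ih =>
      rw [Finset.fold_cons, Finset.fold_cons]
      simp [ih, max_def]

lemma fold_sup_nonneg {n : ℕ} (t : Finset ℕ) (g : ℕ → C(Sph n, ℝ))
    (hg : ∀ i, 0 ≤ g i) : 0 ≤ Finset.fold (β := C(Sph n, ℝ)) (· ⊔ ·) 0 g t := by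
  induction t using Finset.cons_induction with
  | empty => simp
  | cons a s ha ih =>
      rw [Finset.fold_cons]
      exact le_sup_of_le_right ih

lemma V_fold_le {n : ℕ} (V : C(Sph n, ℝ) → ℝ)
    (hpos : ∀ f : C(Sph n, ℝ), 0 ≤ f → 0 ≤ V f)
    (hval : ∀ f g : C(Sph n, ℝ), 0 ≤ f → 0 ≤ g →
      V (f ⊔ g) + V (f ⊓ g) = V f + V g)
    (hzero : V 0 = 0) (t : Finset ℕ) (g : ℕ → C(Sph n, ℝ)) (hg : ∀ i, 0 ≤ g i) :
    V (Finset.fold (β := C(Sph n, ℝ)) (· ⊔ ·) 0 g t) ≤ ∑ i ∈ t, V (g i) := by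
  induction t using Finset.cons_induction with
  | empty => simp [hzero]
  | cons a s ha ih =>
      rw [Finset.fold_cons, Finset.sum_cons]
      have hF : 0 ≤ Finset.fold (β := C(Sph n, ℝ)) (· ⊔ ·) 0 g s := fold_sup_nonneg s g hg
      have h1 := hval (g a) (Finset.fold (β := C(Sph n, ℝ)) (· ⊔ ·) 0 g s) (hg a) hF
      have h2 : 0 ≤ V (g a ⊓ Finset.fold (β := C(Sph n, ℝ)) (· ⊔ ·) 0 g s) :=
        hpos _ (le_inf (hg a) hF)
      linarith

lemma sval_iUnion_le {n : ℕ} (V : C(Sph n, ℝ) → ℝ)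
    (hpos : ∀ f : C(Sph n, ℝ), 0 ≤ f → 0 ≤ V f)
    (hval : ∀ f g : C(Sph n, ℝ), 0 ≤ f → 0 ≤ g →
      V (f ⊔ g) + V (f ⊓ g) = V f + V g)
    (hzero : V 0 = 0)
    (G : ℕ → Set (Sph n)) (hG : ∀ i, IsOpen (G i)) :
    sval V (⋃ i, G i) ≤ ∑' i, sval V (G i) := by
  refine iSup_le fun f => iSup_le fun hf => iSup_le fun hsupp => ?_
  have hf0 : (0 : C(Sph n, ℝ)) ≤ f := ContinuousMap.le_def.mpr fun x => (hf x).1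
  have hcomp : IsCompact (tsupport ⇑f) := (isClosed_tsupport _).isCompact
  obtain ⟨t, ht⟩ := hcomp.elim_finite_subcover G hG hsupp
  set u : ℕ → Set (Sph n) := fun i => if i ∈ t then G i else ∅ with hu
  have huo : ∀ i, IsOpen (u i) := by
    intro i; by_cases h : i ∈ t <;> simp [hu, h, hG i]
  have hsu : tsupport ⇑f ⊆ ⋃ i, u i := by
    intro x hx
    obtain ⟨i, hi, hxi⟩ := mem_iUnion₂.mp (ht hx)
    exact mem_iUnion.mpr ⟨i, by simp [hu, hi, hxi]⟩
  obtain ⟨v, hsv, hvo, hvc⟩ :=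
    exists_subset_iUnion_closure_subset (isClosed_tsupport ⇑f) huo
      (fun x _ => Set.Finite.subset t.finite_toSet
        (fun i hi => by
          simp only [hu, mem_setOf_eq] at hi
          by_contra hit
          rw [if_neg (by simpa using hit)] at hi
          exact hi)) hsu
  have hurysohn : ∀ i, ∃ h : C(Sph n, ℝ), tsupport ⇑h ⊆ u i ∧
      EqOn h 1 (closure (v i)) ∧ ∀ x, h x ∈ Icc (0:ℝ) 1 := fun i =>
    exists_tsupport_one_of_isOpen_isClosed (huo i)
      (isClosed_closure.isCompact) isClosed_closure (hvc i)
  choose h hh1 hh2 hh3 using hurysohn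
  set g : ℕ → C(Sph n, ℝ) := fun i => f ⊓ h i with hgdef
  have hg0 : ∀ i, 0 ≤ g i := fun i =>
    le_inf hf0 (ContinuousMap.le_def.mpr fun x => (hh3 i x).1)
  have hgIcc : ∀ i, ∀ x, g i x ∈ Icc (0:ℝ) 1 := by
    intro i x
    have : g i x = min (f x) (h i x) := rfl
    rw [this]
    exact ⟨le_min (hf x).1 (hh3 i x).1, (min_le_left _ _).trans (hf x).2⟩
  have hgsupp : ∀ i ∈ t, tsupport ⇑(g i) ⊆ G i := by
    intro i hi
    have hss : Function.support ⇑(g i) ⊆ Function.support ⇑(h i) := by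
      intro x hx
      simp only [Function.mem_support] at hx ⊢
      intro hz
      apply hx
      have : g i x = min (f x) (h i x) := rfl
      rw [this, hz, min_eq_right (hf x).1]
    calc tsupport ⇑(g i) ⊆ tsupport ⇑(h i) := closure_mono hss
      _ ⊆ u i := hh1 i
      _ = G i := by simp [hu, hi]
  have key : f = Finset.fold (β := C(Sph n, ℝ)) (· ⊔ ·) 0 g t := by
    ext x
    rw [fold_sup_apply]
    apply le_antisymm
    · rw [Finset.le_fold_max]
      by_cases hx : f x = 0
      · exact Or.inl hx.le
      · have hxs : x ∈ tsupport ⇑f := subset_closure (Function.mem_support.mpr hx)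
        obtain ⟨i, hxi⟩ := mem_iUnion.mp (hsv hxs)
        have hit : i ∈ t := by
          by_contra hit
          have := (hvc i) (subset_closure hxi)
          simp [hu, hit] at this
        refine Or.inr ⟨i, hit, ?_⟩
        have h1 : h i x = 1 := hh2 i (subset_closure hxi)
        have : g i x = min (f x) (h i x) := rfl
        rw [this, h1, min_eq_left (hf x).2]
    · rw [Finset.fold_max_le]
      exact ⟨(hf x).1, fun i _ => min_le_left _ _⟩
  calc ENNReal.ofReal (V f) = ENNReal.ofReal (V (Finset.fold (β := C(Sph n, ℝ)) (· ⊔ ·) 0 g t)) := by rw [← key]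
    _ ≤ ENNReal.ofReal (∑ i ∈ t, V (g i)) :=
        ENNReal.ofReal_le_ofReal (V_fold_le V hpos hval hzero t g hg0)
    _ = ∑ i ∈ t, ENNReal.ofReal (V (g i)) :=
        ENNReal.ofReal_sum_of_nonneg fun i _ => hpos _ (hg0 i)
    _ ≤ ∑ i ∈ t, sval V (G i) := by
        refine Finset.sum_le_sum fun i hi => ?_
        refine le_trans ?_ (le_iSup _ (g i))
        refine le_trans ?_ (le_iSup _ (hgIcc i))
        exact le_iSup (fun _ : tsupport ⇑(g i) ⊆ G i => ENNReal.ofReal (V (g i)))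
          (hgsupp i hi)
    _ ≤ ∑' i, sval V (G i) := ENNReal.sum_le_tsum t

/-- for a positive radial continuous valuation `V` with `V(0)=0`,
the set function `μ_V* = μ_{V,1}*` is an outer measure on `S^{n-1}`. -/
theorem stmt7 {n : ℕ} (hn : 2 ≤ n) (V : C(Sph n, ℝ) → ℝ)
    (hpos : ∀ f : C(Sph n, ℝ), 0 ≤ f → 0 ≤ V f)
    (hval : ∀ f g : C(Sph n, ℝ), 0 ≤ f → 0 ≤ g →
      V (f ⊔ g) + V (f ⊓ g) = V f + V g)
    (hcont : ContinuousOn V {f : C(Sph n, ℝ) | 0 ≤ f})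
    (hzero : V 0 = 0) :
    muStar V 1 (∅ : Set (Sph n)) = 0 ∧
    (∀ A B : Set (Sph n), A ⊆ B → muStar V 1 A ≤ muStar V 1 B) ∧
    (∀ A : ℕ → Set (Sph n), muStar V 1 (⋃ i, A i) ≤ ∑' i, muStar V 1 (A i)) := by
  refine ⟨?_, ?_, ?_⟩
  · -- empty set
    refine le_antisymm ?_ zero_le
    rw [muStar_eq]
    refine iInf_le_of_le ∅ (iInf_le_of_le isOpen_empty
      (iInf_le_of_le subset_rfl ?_))
    refine iSup_le fun f => iSup_le fun hf => iSup_le fun hsupp => ?_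
    have hf0 : f = 0 := ContinuousMap.ext fun x =>
      image_eq_zero_of_notMem_tsupport fun hx => (hsupp hx).elim
    simp [hf0, hzero]
  · -- monotone
    intro A B hAB
    rw [muStar_eq, muStar_eq]
    refine le_iInf fun G => le_iInf fun hG => le_iInf fun hBG => ?_
    exact iInf_le_of_le G (iInf_le_of_le hG
      (iInf_le (fun _ => sval V G) (hAB.trans hBG)))
  · -- countable subadditivity
    intro A
    refine ENNReal.le_of_forall_pos_le_add fun ε hε hlt => ?_
    obtain ⟨δ, δpos, hδ⟩ :=
      ENNReal.exists_pos_sum_of_countable (ε := (ε : ℝ≥0∞)) (by exact_mod_cast hε.ne') ℕ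
    have H : ∀ i, ∃ G : Set (Sph n), IsOpen G ∧ A i ⊆ G ∧
        sval V G < muStar V 1 (A i) + δ i := by
      intro i
      have hne : muStar V 1 (A i) ≠ ⊤ :=
        ne_top_of_le_ne_top hlt.ne (ENNReal.le_tsum i)
      have hlt' : muStar V 1 (A i) < muStar V 1 (A i) + δ i :=
        ENNReal.lt_add_right hne (by exact_mod_cast (δpos i).ne')
      rw [muStar_eq] at hlt'
      obtain ⟨G, hG⟩ := iInf_lt_iff.mp hlt'
      obtain ⟨hGo, hG⟩ := iInf_lt_iff.mp hG
      obtain ⟨hAG, hG⟩ := iInf_lt_iff.mp hG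
      exact ⟨G, hGo, hAG, hG⟩
    choose G hGo hAG hGlt using H
    calc muStar V 1 (⋃ i, A i) ≤ sval V (⋃ i, G i) := by
          rw [muStar_eq]
          exact iInf_le_of_le (⋃ i, G i) (iInf_le_of_le (isOpen_iUnion hGo)
            (iInf_le (fun _ => sval V (⋃ i, G i)) (iUnion_mono hAG)))
      _ ≤ ∑' i, sval V (G i) := sval_iUnion_le V hpos hval hzero G hGo
      _ ≤ ∑' i, (muStar V 1 (A i) + δ i) :=
          ENNReal.tsum_le_tsum fun i => (hGlt i).le
      _ = (∑' i, muStar V 1 (A i)) + ∑' i, (δ i : ℝ≥0∞) := ENNReal.tsum_add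
      _ ≤ (∑' i, muStar V 1 (A i)) + ε := add_le_add_right hδ.le _
end
end

section
/- Let Ṽ : C(S^{n-1})⁺ → [0,∞) be a positive radial continuous valuation with Ṽ(0) = 0. Then every Borel subset of S^{n-1} is Carathéodory-measurable with respect to the outer measure μ_V*; in particular, for every open set G ⊆ S^{n-1} and every A ⊆ S^{n-1}, μ_V*(A) = μ_V*(A ∩ G) + μ_V*(A ∩ G^c). Consequently the restriction μ_V of μ_V* to the Borel σ-algebra of S^{n-1} is a countably additive measure. -/
open MeasureTheory Metric Set
open scoped ENNReal

noncomputable section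

namespace Stmt8Aux

variable {n : ℕ} (V : C(Sph n, ℝ) → ℝ)

/-- The type of admissible functions for an open set `G`. -/
def Adm (G : Set (Sph n)) : Type _ :=
  {f : C(Sph n, ℝ) // (∀ x, f x ∈ Set.Icc (0:ℝ) 1) ∧ tsupport ⇑f ⊆ G}

instance (G : Set (Sph n)) : Nonempty (Adm (n := n) G) :=
  ⟨⟨0, fun x => by simp, by simp [tsupport]⟩⟩

/-- The value of the induced set function on an open set. -/
def sV (G : Set (Sph n)) : ℝ≥0∞ :=
  ⨆ (f : C(Sph n, ℝ)) (_ : ∀ x, f x ∈ Set.Icc (0:ℝ) 1) (_ : tsupport ⇑f ⊆ G),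
    ENNReal.ofReal (V f)

lemma muStar_def (A : Set (Sph n)) :
    muStar V 1 A = ⨅ (G : Set (Sph n)) (_ : IsOpen G) (_ : A ⊆ G), sV V G := rfl

lemma le_sV {G : Set (Sph n)} (f : C(Sph n, ℝ)) (h1 : ∀ x, f x ∈ Set.Icc (0:ℝ) 1)
    (h2 : tsupport ⇑f ⊆ G) : ENNReal.ofReal (V f) ≤ sV V G := by
  refine le_trans ?_ (le_iSup _ f)
  rw [iSup_pos h1 (f := fun _ => ⨆ (_ : tsupport ⇑f ⊆ G), ENNReal.ofReal (V f))]
  exact le_iSup_of_le h2 le_rfl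

lemma sV_le {G : Set (Sph n)} {c : ℝ≥0∞}
    (h : ∀ f : C(Sph n, ℝ), (∀ x, f x ∈ Set.Icc (0:ℝ) 1) → tsupport ⇑f ⊆ G →
      ENNReal.ofReal (V f) ≤ c) : sV V G ≤ c :=
  iSup_le fun f => iSup_le fun h1 => iSup_le fun h2 => h f h1 h2

lemma sV_eq_subtype (G : Set (Sph n)) :
    sV V G = ⨆ p : Adm (n := n) G, ENNReal.ofReal (V p.1) :=
  le_antisymm (sV_le V fun f h1 h2 => le_iSup_of_le ⟨f, h1, h2⟩ le_rfl)
    (iSup_le fun p => le_sV V p.1 p.2.1 p.2.2)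

lemma sV_mono {G G' : Set (Sph n)} (h : G ⊆ G') : sV V G ≤ sV V G' :=
  sV_le V fun f h1 h2 => le_sV V f h1 (h2.trans h)

lemma muStar_le_sV {A G : Set (Sph n)} (hG : IsOpen G) (hAG : A ⊆ G) :
    muStar V 1 A ≤ sV V G := by
  rw [muStar_def]
  exact iInf_le_of_le G (iInf_le_of_le hG (iInf_le_of_le hAG le_rfl))

lemma muStar_mono {A B : Set (Sph n)} (h : A ⊆ B) : muStar V 1 A ≤ muStar V 1 B := by
  rw [muStar_def, muStar_def]
  exact le_iInf fun G => le_iInf fun hG => le_iInf fun hBG =>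
    iInf_le_of_le G (iInf_le_of_le hG (iInf_le_of_le (h.trans hBG) le_rfl))

lemma eq_zero_of_tsupport_empty (f : C(Sph n, ℝ)) (h : tsupport ⇑f ⊆ (∅ : Set (Sph n))) :
    f = 0 := by
  ext x
  simp only [ContinuousMap.zero_apply]
  by_contra hx
  exact h (subset_tsupport _ hx)

lemma sV_empty (hzero : V 0 = 0) : sV V (∅ : Set (Sph n)) = 0 := by
  refine le_antisymm (sV_le V fun f h1 h2 => ?_) zero_le
  rw [eq_zero_of_tsupport_empty f h2]
  simp [hzero]

lemma muStar_empty (hzero : V 0 = 0) : muStar V 1 (∅ : Set (Sph n)) = 0 :=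
  le_antisymm (le_trans (muStar_le_sV V isOpen_empty subset_rfl)
    (sV_empty V hzero).le) zero_le

lemma nonneg_of_Icc (f : C(Sph n, ℝ)) (h : ∀ x, f x ∈ Set.Icc (0:ℝ) 1) : 0 ≤ f :=
  ContinuousMap.le_def.2 fun x => (h x).1

/-- Lattice decomposition of an admissible function subordinate to a two-element open cover. -/
lemma exists_decomp {G₁ G₂ : Set (Sph n)} (hG₁ : IsOpen G₁) (hG₂ : IsOpen G₂)
    (f : C(Sph n, ℝ)) (h1 : ∀ x, f x ∈ Set.Icc (0:ℝ) 1) (h2 : tsupport ⇑f ⊆ G₁ ∪ G₂) :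
    ∃ g₁ g₂ : C(Sph n, ℝ), (∀ x, g₁ x ∈ Set.Icc (0:ℝ) 1) ∧ (∀ x, g₂ x ∈ Set.Icc (0:ℝ) 1) ∧
      tsupport ⇑g₁ ⊆ G₁ ∧ tsupport ⇑g₂ ⊆ G₂ ∧ g₁ ⊔ g₂ = f := by
  classical
  set U : Bool → Set (Sph n) := fun b => bif b then G₁ else G₂ with hU
  have hUo : ∀ b, IsOpen (U b) := by rintro (_|_) <;> simpa [U]
  have hcov : tsupport ⇑f ⊆ ⋃ b, U b := by
    intro x hx
    rcases h2 hx with h | h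
    · exact mem_iUnion.2 ⟨true, by simpa [U]⟩
    · exact mem_iUnion.2 ⟨false, by simpa [U]⟩
  obtain ⟨F, hF⟩ := BumpCovering.exists_isSubordinate (isClosed_tsupport ⇑f) U hUo hcov
  refine ⟨f ⊓ F true, f ⊓ F false, ?_, ?_, ?_, ?_, ?_⟩
  · intro x
    exact ⟨le_min (h1 x).1 (F.nonneg true x), by
      simpa [ContinuousMap.inf_apply] using min_le_of_left_le (h1 x).2⟩
  · intro x
    exact ⟨le_min (h1 x).1 (F.nonneg false x), by
      simpa [ContinuousMap.inf_apply] using min_le_of_left_le (h1 x).2⟩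
  · refine subset_trans (closure_mono ?_) (hF true)
    intro x hx
    simp only [Function.mem_support, ContinuousMap.inf_apply] at hx
    intro hFx
    exact hx (by simp [hFx, min_eq_right (h1 x).1])
  · refine subset_trans (closure_mono ?_) (hF false)
    intro x hx
    simp only [Function.mem_support, ContinuousMap.inf_apply] at hx
    intro hFx
    exact hx (by simp [hFx, min_eq_right (h1 x).1])
  · ext x
    simp only [ContinuousMap.sup_apply, ContinuousMap.inf_apply]
    by_cases hx : x ∈ tsupport ⇑f
    · obtain ⟨b, hb⟩ := F.eventuallyEq_one' x hx
      have hb1 : F b x = 1 := by simpa using hb.eq_of_nhds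
      rcases b with _ | _
      · have : min (f x) (F false x) = f x := min_eq_left (by rw [hb1]; exact (h1 x).2)
        rw [this]
        exact max_eq_right (min_le_left _ _)
      · have : min (f x) (F true x) = f x := min_eq_left (by rw [hb1]; exact (h1 x).2)
        rw [this]
        exact max_eq_left (min_le_left _ _)
    · have hfx : f x = 0 := image_eq_zero_of_notMem_tsupport hx
      rw [hfx]
      simp [min_eq_left (F.nonneg true x), min_eq_left (F.nonneg false x)]

variable (hpos : ∀ f : C(Sph n, ℝ), 0 ≤ f → 0 ≤ V f)
variable (hval : ∀ f g : C(Sph n, ℝ), 0 ≤ f → 0 ≤ g → V (f ⊔ g) + V (f ⊓ g) = V f + V g)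
variable (hzero : V 0 = 0)

include hpos hval in
lemma sV_union_le {G₁ G₂ : Set (Sph n)} (hG₁ : IsOpen G₁) (hG₂ : IsOpen G₂) :
    sV V (G₁ ∪ G₂) ≤ sV V G₁ + sV V G₂ := by
  refine sV_le V fun f h1 h2 => ?_
  obtain ⟨g₁, g₂, hg₁, hg₂, hs₁, hs₂, hsum⟩ := exists_decomp hG₁ hG₂ f h1 h2
  have hkey : V f ≤ V g₁ + V g₂ := by
    have h0₁ := nonneg_of_Icc g₁ hg₁
    have h0₂ := nonneg_of_Icc g₂ hg₂
    have hv := hval g₁ g₂ h0₁ h0₂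
    rw [hsum] at hv
    have hmin : 0 ≤ V (g₁ ⊓ g₂) := hpos _ (le_inf h0₁ h0₂)
    linarith
  calc ENNReal.ofReal (V f) ≤ ENNReal.ofReal (V g₁ + V g₂) := ENNReal.ofReal_le_ofReal hkey
    _ ≤ ENNReal.ofReal (V g₁) + ENNReal.ofReal (V g₂) := ENNReal.ofReal_add_le
    _ ≤ sV V G₁ + sV V G₂ := add_le_add (le_sV V g₁ hg₁ hs₁) (le_sV V g₂ hg₂ hs₂)

include hpos hval hzero in
lemma sV_finset_le {ι : Type*} (G : ι → Set (Sph n)) (hG : ∀ i, IsOpen (G i)) (t : Finset ι) :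
    sV V (⋃ i ∈ t, G i) ≤ ∑ i ∈ t, sV V (G i) := by
  classical
  induction t using Finset.induction_on with
  | empty => simpa using (sV_empty V hzero).le
  | @insert a t ha ih =>
    rw [Finset.set_biUnion_insert, Finset.sum_insert ha]
    exact le_trans (sV_union_le V hpos hval (hG a) (isOpen_biUnion fun i _ => hG i))
      (add_le_add_right ih _)

include hpos hval hzero in
lemma sV_iUnion_le (G : ℕ → Set (Sph n)) (hG : ∀ i, IsOpen (G i)) :
    sV V (⋃ i, G i) ≤ ∑' i, sV V (G i) := by
  refine sV_le V fun f h1 h2 => ?_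
  have hcpt : IsCompact (tsupport ⇑f) := (isClosed_tsupport ⇑f).isCompact
  obtain ⟨t, ht⟩ := hcpt.elim_finite_subcover G hG h2
  calc ENNReal.ofReal (V f) ≤ sV V (⋃ i ∈ t, G i) := le_sV V f h1 ht
    _ ≤ ∑ i ∈ t, sV V (G i) := sV_finset_le V hpos hval hzero G hG t
    _ ≤ ∑' i, sV V (G i) := ENNReal.sum_le_tsum t

include hpos hval hzero in
lemma muStar_iUnion_le (A : ℕ → Set (Sph n)) :
    muStar V 1 (⋃ i, A i) ≤ ∑' i, muStar V 1 (A i) := by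
  refine ENNReal.le_of_forall_pos_le_add fun ε hε _ => ?_
  obtain ⟨δ, hδpos, hδsum⟩ := ENNReal.exists_pos_sum_of_countable'
    (by exact_mod_cast hε.ne' : (ε : ℝ≥0∞) ≠ 0) ℕ
  have hch : ∀ i, ∃ G, IsOpen G ∧ A i ⊆ G ∧ sV V G ≤ muStar V 1 (A i) + δ i := by
    intro i
    by_cases h : muStar V 1 (A i) = ∞
    · exact ⟨univ, isOpen_univ, subset_univ _, by simp [h]⟩
    · have hlt : muStar V 1 (A i) < muStar V 1 (A i) + δ i :=
        ENNReal.lt_add_right h (hδpos i).ne'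
      rw [muStar_def] at hlt
      simp only [iInf_lt_iff] at hlt
      obtain ⟨G, hGo, hAG, hG⟩ := hlt
      exact ⟨G, hGo, hAG, hG.le⟩
  choose G hGo hAG hGle using hch
  calc muStar V 1 (⋃ i, A i)
      ≤ sV V (⋃ i, G i) :=
        muStar_le_sV V (isOpen_iUnion hGo) (iUnion_mono hAG)
    _ ≤ ∑' i, sV V (G i) := sV_iUnion_le V hpos hval hzero G hGo
    _ ≤ ∑' i, (muStar V 1 (A i) + δ i) := ENNReal.tsum_le_tsum hGle
    _ = (∑' i, muStar V 1 (A i)) + ∑' i, δ i := ENNReal.tsum_add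
    _ ≤ (∑' i, muStar V 1 (A i)) + ε := add_le_add_right hδsum.le _

include hpos hval hzero in
/-- The outer measure `μ_V*`. -/
def nuOM : OuterMeasure (Sph n) where
  measureOf := muStar V 1
  empty := muStar_empty V hzero
  mono h := muStar_mono V h
  iUnion_nat s _ := muStar_iUnion_le V hpos hval hzero s

lemma nuOM_apply (A : Set (Sph n)) : nuOM V hpos hval hzero A = muStar V 1 A := rfl

include hpos hval hzero in
lemma isCaratheodory_open {G : Set (Sph n)} (hG : IsOpen G) :
    MeasurableSet[(nuOM V hpos hval hzero).caratheodory] G := by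
  rw [OuterMeasure.isCaratheodory_iff_le]
  intro t
  rw [nuOM_apply, nuOM_apply, nuOM_apply, muStar_def V t]
  refine le_iInf fun U => le_iInf fun hU => le_iInf fun htU => ?_
  have h1 : muStar V 1 (t ∩ G) ≤ sV V (U ∩ G) :=
    muStar_le_sV V (hU.inter hG) (inter_subset_inter_left _ htU)
  refine le_trans (add_le_add_left h1 _) ?_
  rw [sV_eq_subtype V (U ∩ G), ENNReal.iSup_add]
  refine iSup_le fun p => ?_
  obtain ⟨f, h1f, h2f⟩ := p
  set W : Set (Sph n) := U \ tsupport ⇑f with hW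
  have hWo : IsOpen W := hU.sdiff (isClosed_tsupport ⇑f)
  have htW : t \ G ⊆ W := by
    intro x hx
    exact ⟨htU hx.1, fun hxf => hx.2 (h2f hxf).2⟩
  have h2 : muStar V 1 (t \ G) ≤ sV V W := muStar_le_sV V hWo htW
  refine le_trans (add_le_add_right h2 _) ?_
  rw [sV_eq_subtype V W, ENNReal.add_iSup]
  refine iSup_le fun q => ?_
  obtain ⟨g, h1g, h2g⟩ := q
  have hf0 := nonneg_of_Icc f h1f
  have hg0 := nonneg_of_Icc g h1g
  have hinf : f ⊓ g = 0 := by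
    ext x
    simp only [ContinuousMap.inf_apply, ContinuousMap.zero_apply]
    by_cases hx : g x = 0
    · rw [hx]; exact min_eq_right (h1f x).1
    · have hxW : x ∈ W := h2g (subset_tsupport _ hx)
      have hfx : f x = 0 := image_eq_zero_of_notMem_tsupport hxW.2
      rw [hfx]; exact min_eq_left (h1g x).1
  have hv := hval f g hf0 hg0
  rw [hinf, hzero, add_zero] at hv
  have hsup1 : ∀ x, (f ⊔ g) x ∈ Set.Icc (0:ℝ) 1 := fun x =>
    ⟨le_max_of_le_left (h1f x).1, max_le (h1f x).2 (h1g x).2⟩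
  have hsupp : tsupport ⇑(f ⊔ g) ⊆ U := by
    have hsub : Function.support ⇑(f ⊔ g) ⊆ Function.support ⇑f ∪ Function.support ⇑g := by
      intro x hx
      simp only [Function.mem_support, ContinuousMap.sup_apply] at hx
      by_contra hc
      simp only [mem_union, Function.mem_support, not_or, not_not] at hc
      exact hx (by rw [hc.1, hc.2, max_self])
    refine subset_trans (closure_mono hsub) ?_
    rw [closure_union]
    refine union_subset (h2f.trans (inter_subset_left)) (h2g.trans ?_)
    exact fun x hx => hx.1
  calc ENNReal.ofReal (V f) + ENNReal.ofReal (V g)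
      = ENNReal.ofReal (V f + V g) := (ENNReal.ofReal_add (hpos f hf0) (hpos g hg0)).symm
    _ = ENNReal.ofReal (V (f ⊔ g)) := by rw [hv]
    _ ≤ sV V U := le_sV V (f ⊔ g) hsup1 hsupp

include hpos hval hzero in
lemma isCaratheodory_measurable {B : Set (Sph n)} (hB : MeasurableSet B) :
    MeasurableSet[(nuOM V hpos hval hzero).caratheodory] B := by
  have hle : (inferInstance : MeasurableSpace (Sph n)) ≤
      (nuOM V hpos hval hzero).caratheodory := by
    rw [BorelSpace.measurable_eq (α := Sph n)]
    exact MeasurableSpace.generateFrom_le fun s hs =>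
      isCaratheodory_open V hpos hval hzero hs
  exact hle B hB

end Stmt8Aux

/-- every Borel subset of `S^{n-1}` is Carathéodory-measurable with respect
to `μ_V*`; in particular this holds for open sets, and consequently the restriction of
`μ_V*` to the Borel σ-algebra is countably additive. -/
theorem stmt8 {n : ℕ} (hn : 2 ≤ n) (V : C(Sph n, ℝ) → ℝ)
    (hpos : ∀ f : C(Sph n, ℝ), 0 ≤ f → 0 ≤ V f)
    (hval : ∀ f g : C(Sph n, ℝ), 0 ≤ f → 0 ≤ g →
      V (f ⊔ g) + V (f ⊓ g) = V f + V g)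
    (hcont : ContinuousOn V {f : C(Sph n, ℝ) | 0 ≤ f})
    (hzero : V 0 = 0) :
    (∀ B : Set (Sph n), MeasurableSet B →
      ∀ A : Set (Sph n), muStar V 1 A = muStar V 1 (A ∩ B) + muStar V 1 (A ∩ Bᶜ)) ∧
    (∀ A : ℕ → Set (Sph n), (∀ i, MeasurableSet (A i)) →
      Pairwise (Function.onFun Disjoint A) →
      muStar V 1 (⋃ i, A i) = ∑' i, muStar V 1 (A i)) := by
  constructor
  · intro B hB A
    have h := (Stmt8Aux.isCaratheodory_measurable V hpos hval hzero hB)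
    rw [OuterMeasure.isCaratheodory_iff] at h
    have := h A
    rw [Set.diff_eq] at this
    exact this
  · intro A hA hdisj
    exact (Stmt8Aux.nuOM V hpos hval hzero).iUnion_eq_of_caratheodory
      (fun i => Stmt8Aux.isCaratheodory_measurable V hpos hval hzero (hA i)) hdisj
end
end

section
/- Let Ṽ : C(S^{n-1})⁺ → [0,∞) be a positive, rotation invariant, radial continuous valuation with Ṽ(0) = 0. Then the outer measure μ_V* is finite on the whole sphere: μ_V*(S^{n-1}) < ∞. -/
open MeasureTheory Metric Set
open scoped ENNReal

noncomputable section

/-- for a positive, rotation invariant, radial continuous valuation `V`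
with `V(0)=0`, the outer measure `μ_V*` is finite on the whole sphere. -/
theorem stmt9 {n : ℕ} (hn : 2 ≤ n) (V : C(Sph n, ℝ) → ℝ)
    (hpos : ∀ f : C(Sph n, ℝ), 0 ≤ f → 0 ≤ V f)
    (hval : ∀ f g : C(Sph n, ℝ), 0 ≤ f → 0 ≤ g →
      V (f ⊔ g) + V (f ⊓ g) = V f + V g)
    (hcont : ContinuousOn V {f : C(Sph n, ℝ) | 0 ≤ f})
    (hrot : ∀ φ : EuclideanSpace ℝ (Fin n) ≃ₗᵢ[ℝ] EuclideanSpace ℝ (Fin n), IsRotation φ →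
      ∀ f : C(Sph n, ℝ), 0 ≤ f → V (f.comp (rotMap φ)) = V f)
    (hzero : V 0 = 0) :
    muStar V 1 (Set.univ : Set (Sph n)) < ⊤ := by

  classical
  -- `P a` : `V` is bounded (in absolute value) on `{f : 0 ≤ f ≤ a}`.
  set P : ℝ → Prop := fun a => ∃ M : ℝ, ∀ f : C(Sph n, ℝ), 0 ≤ f → (∀ x, f x ≤ a) → |V f| ≤ M
    with hP
  -- monotonicity of P
  have Pmono : ∀ a b : ℝ, b ≤ a → P a → P b := by
    rintro a b hba ⟨M, hM⟩
    exact ⟨M, fun f hf0 hfb => hM f hf0 (fun x => (hfb x).trans hba)⟩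
  -- P 0
  have P0 : P 0 := by
    refine ⟨|V 0|, fun f hf0 hf1 => ?_⟩
    have hf : f = 0 := by
      ext x
      have h1 := ContinuousMap.le_def.mp hf0 x
      simp only [ContinuousMap.zero_apply] at h1 ⊢
      linarith [hf1 x]
    rw [hf]
  -- the key extension step, coming from continuity of `V` at the constant `a`.
  have key : ∀ a : ℝ, 0 ≤ a → ∃ δ > (0:ℝ), ∀ b : ℝ, 0 ≤ b → a - δ ≤ b → b ≤ a →
      P b → P (a + δ) := by
    intro a ha
    have hmem : (ContinuousMap.const (Sph n) a) ∈ {f : C(Sph n, ℝ) | 0 ≤ f} := by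
      rw [Set.mem_setOf_eq, ContinuousMap.le_def]
      intro x
      simpa using ha
    have hcw := hcont _ hmem
    rw [Metric.continuousWithinAt_iff] at hcw
    obtain ⟨δ₀, hδ₀, hd⟩ := hcw 1 one_pos
    refine ⟨δ₀ / 2, by positivity, ?_⟩
    rintro b hb0 hab hba ⟨M, hM⟩
    -- any nonnegative function with values in [b, a + δ₀/2] has |V ·| ≤ |V (const a)| + 1
    have band : ∀ h : C(Sph n, ℝ), 0 ≤ h → (∀ x, b ≤ h x) → (∀ x, h x ≤ a + δ₀ / 2) →
        |V h| ≤ |V (ContinuousMap.const (Sph n) a)| + 1 := by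
      intro h h0 hl hu
      have hdist : dist h (ContinuousMap.const (Sph n) a) < δ₀ := by
        have hle : dist h (ContinuousMap.const (Sph n) a) ≤ δ₀ / 2 := by
          rw [ContinuousMap.dist_le (by positivity)]
          intro x
          rw [Real.dist_eq, abs_le]
          constructor
          · have := hl x
            simp only [ContinuousMap.const_apply]
            linarith
          · have := hu x
            simp only [ContinuousMap.const_apply]
            linarith
        linarith
      have hmemh : h ∈ {f : C(Sph n, ℝ) | 0 ≤ f} := h0
      have := hd hmemh hdist
      rw [Real.dist_eq] at this
      have h1 := abs_le.mp (le_of_lt this)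
      have h2 := abs_le.mp (le_refl |V (ContinuousMap.const (Sph n) a)|)
      rw [abs_le]
      constructor <;> [skip; skip] <;>
        · have := neg_abs_le (V (ContinuousMap.const (Sph n) a))
          have := le_abs_self (V (ContinuousMap.const (Sph n) a))
          linarith
    refine ⟨M + (|V (ContinuousMap.const (Sph n) a)| + 1) +
        (|V (ContinuousMap.const (Sph n) a)| + 1), ?_⟩
    intro f hf0 hfu
    have hcb0 : (0 : C(Sph n, ℝ)) ≤ ContinuousMap.const (Sph n) b := by
      rw [ContinuousMap.le_def]; intro x; simpa using hb0
    have hv := hval f (ContinuousMap.const (Sph n) b) hf0 hcb0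
    have hVf : V f = V (f ⊔ ContinuousMap.const (Sph n) b) +
        V (f ⊓ ContinuousMap.const (Sph n) b) - V (ContinuousMap.const (Sph n) b) := by
      linarith
    have h1 : |V (f ⊔ ContinuousMap.const (Sph n) b)| ≤
        |V (ContinuousMap.const (Sph n) a)| + 1 := by
      apply band
      · exact le_trans hcb0 le_sup_right
      · intro x
        simp only [ContinuousMap.sup_apply, ContinuousMap.const_apply]
        exact le_max_right _ _
      · intro x
        simp only [ContinuousMap.sup_apply, ContinuousMap.const_apply]
        have := hfu x
        apply max_le this
        linarith
    have h2 : |V (f ⊓ ContinuousMap.const (Sph n) b)| ≤ M := by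
      apply hM
      · rw [ContinuousMap.le_def]
        intro x
        simp only [ContinuousMap.inf_apply, ContinuousMap.const_apply,
          ContinuousMap.zero_apply]
        have := ContinuousMap.le_def.mp hf0 x
        simp only [ContinuousMap.zero_apply] at this
        exact le_min this hb0
      · intro x
        simp only [ContinuousMap.inf_apply, ContinuousMap.const_apply]
        exact min_le_right _ _
    have h3 : |V (ContinuousMap.const (Sph n) b)| ≤
        |V (ContinuousMap.const (Sph n) a)| + 1 := by
      apply band
      · exact hcb0
      · intro x; simp
      · intro x
        simp only [ContinuousMap.const_apply]
        linarith
    rw [hVf]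
    have ha1 := abs_le.mp h1
    have ha2 := abs_le.mp h2
    have ha3 := abs_le.mp h3
    rw [abs_le]
    constructor <;> linarith
  -- continuous induction: P 1
  have P1 : P 1 := by
    set A : Set ℝ := {a | 0 ≤ a ∧ a ≤ 1 ∧ P a} with hA
    have hA0 : (0:ℝ) ∈ A := ⟨le_refl 0, zero_le_one, P0⟩
    have hAne : A.Nonempty := ⟨0, hA0⟩
    have hAbdd : BddAbove A := ⟨1, fun x hx => hx.2.1⟩
    set s : ℝ := sSup A with hs
    have hs0 : 0 ≤ s := le_csSup hAbdd hA0
    have hs1 : s ≤ 1 := csSup_le hAne (fun x hx => hx.2.1)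
    obtain ⟨δ, hδ, hstep⟩ := key s hs0
    obtain ⟨b, hbA, hbgt⟩ := exists_lt_of_lt_csSup hAne (by linarith : s - δ < s)
    have hbs : b ≤ s := le_csSup hAbdd hbA
    have hPsδ : P (s + δ) := hstep b hbA.1 (le_of_lt hbgt) hbs hbA.2.2
    by_cases hcase : 1 ≤ s + δ
    · exact Pmono _ _ hcase hPsδ
    · exfalso
      push_neg at hcase
      have : s + δ ∈ A := ⟨by linarith, le_of_lt hcase, hPsδ⟩
      have := le_csSup hAbdd this
      linarith
  obtain ⟨M, hM⟩ := P1
  -- conclude finiteness of the outer measure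
  have hb : muStar V 1 (Set.univ : Set (Sph n)) ≤ ENNReal.ofReal M := by
    unfold muStar
    refine le_trans (iInf_le _ Set.univ) ?_
    refine le_trans (iInf_le _ isOpen_univ) ?_
    refine le_trans (iInf_le _ (subset_refl _)) ?_
    refine iSup_le fun f => iSup_le fun hf => iSup_le fun _ => ?_
    apply ENNReal.ofReal_le_ofReal
    refine le_trans (le_abs_self _) (hM f ?_ ?_)
    · rw [ContinuousMap.le_def]
      intro x
      simpa using (hf x).1
    · exact fun x => (hf x).2
  exact lt_of_le_of_lt hb ENNReal.ofReal_lt_top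
end
end

section
/- Let Ṽ : C(S^{n-1})⁺ → [0,∞) be a positive, rotation invariant, radial continuous valuation with Ṽ(0) = 0, let λ > 0, and let ζ_λ be defined on compact subsets of S^{n-1} by ζ_λ(K) = inf{Ṽ(f) : f : S^{n-1} → [0,λ] continuous, f = λ on K}. Then ζ_λ is a content: it is nonnegative and finite (ζ_λ(K) ≤ Ṽ(λ·𝟙) < ∞ for all compact K); monotone (K₁ ⊆ K₂ implies ζ_λ(K₁) ≤ ζ_λ(K₂)); subadditive (ζ_λ(K₁ ∪ K₂) ≤ ζ_λ(K₁) + ζ_λ(K₂) for all compacts K₁, K₂); and additive on disjoint compact sets (K₁ ∩ K₂ = ∅ implies ζ_λ(K₁ ∪ K₂) = ζ_λ(K₁) + ζ_λ(K₂)). -/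
open MeasureTheory Metric Set
open scoped ENNReal

noncomputable section

/-- The content `ζ_λ` associated to a valuation `V` on `C(S^{n-1})⁺`:
`ζ_λ(K) = inf{V(f) : f : S^{n-1} → [0,λ] continuous, f = λ on K}`. -/
def zeta {n : ℕ} (V : C(Sph n, ℝ) → ℝ) (lam : ℝ) (K : Set (Sph n)) : ℝ :=
  sInf (V '' {f : C(Sph n, ℝ) | (∀ x, f x ∈ Set.Icc 0 lam) ∧ ∀ x ∈ K, f x = lam})



variable {X : Type*} [TopologicalSpace X] [CompactSpace X]

lemma bound_lemma (V : C(X, ℝ) → ℝ)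
    (hpos : ∀ f : C(X, ℝ), 0 ≤ f → 0 ≤ V f)
    (hval : ∀ f g : C(X, ℝ), 0 ≤ f → 0 ≤ g → V (f ⊔ g) + V (f ⊓ g) = V f + V g)
    (hcont : ContinuousOn V {f : C(X, ℝ) | 0 ≤ f})
    (lam : ℝ) (hlam : 0 < lam) :
    ∃ C : ℝ, ∀ g : C(X, ℝ), (∀ x, g x ∈ Set.Icc 0 lam) → V g ≤ C := by
  classical
  -- local boundedness near nonneg constants
  have hloc : ∀ t : ℝ, 0 ≤ t → ∃ δ > 0, ∀ g : C(X, ℝ), 0 ≤ g →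
      dist g (ContinuousMap.const X t) < δ → V g ≤ V (ContinuousMap.const X t) + 1 := by
    intro t ht
    have hmem : (ContinuousMap.const X t) ∈ {f : C(X, ℝ) | 0 ≤ f} := by
      simp only [Set.mem_setOf_eq, ContinuousMap.le_def]
      intro a; simpa using ht
    have := (hcont (ContinuousMap.const X t) hmem)
    rw [ContinuousWithinAt, Metric.tendsto_nhdsWithin_nhds] at this
    obtain ⟨δ, hδ, h⟩ := this 1 zero_lt_one
    refine ⟨δ, hδ, fun g hg hd => ?_⟩
    have := h (x := g) (by simpa [ContinuousMap.le_def] using fun a => hg a) hd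
    have : |V g - V (ContinuousMap.const X t)| < 1 := by simpa [Real.dist_eq] using this
    have := (abs_lt.1 this).2
    linarith
  -- choose δ for each point of Icc 0 lam
  have hloc' : ∀ t : ↥(Set.Icc (0:ℝ) lam), ∃ δ > 0, ∀ g : C(X, ℝ), 0 ≤ g →
      dist g (ContinuousMap.const X (t:ℝ)) < δ →
      V g ≤ V (ContinuousMap.const X (t:ℝ)) + 1 := fun t => hloc t t.2.1
  choose δf hδf hMf using hloc'
  -- Lebesgue number for the cover of [0,lam] by balls
  obtain ⟨δ₀, hδ₀, hleb⟩ := lebesgue_number_lemma_of_metric (isCompact_Icc (a := (0:ℝ)) (b := lam))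
    (c := fun t : ↥(Set.Icc (0:ℝ) lam) => Metric.ball (t : ℝ) (δf t))
    (fun t => isOpen_ball)
    (fun x hx => Set.mem_iUnion.2 ⟨⟨x, hx⟩, by simpa using hδf ⟨x, hx⟩⟩)
  -- partition 0 = t0 < ... < tm = lam with mesh < δ₀
  obtain ⟨m, hm⟩ := exists_nat_gt (lam / δ₀)
  have hm0 : 0 < m := by
    have h1 : 0 < lam / δ₀ := div_pos hlam hδ₀
    have : (0:ℝ) < m := lt_trans h1 hm
    exact_mod_cast this
  have hmesh : lam / m < δ₀ := by
    rw [div_lt_iff₀ (by exact_mod_cast hm0)]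
    rw [div_lt_iff₀ hδ₀] at hm
    linarith
  set t : ℕ → ℝ := fun j => lam * j / m with ht
  have hm0' : (0:ℝ) < m := by exact_mod_cast hm0
  have htmono : ∀ j : ℕ, t j ≤ t (j+1) := by
    intro j
    have hj : (j:ℝ) ≤ (j:ℝ)+1 := by linarith
    simp only [ht]
    rw [div_le_div_iff_of_pos_right hm0']
    push_cast
    nlinarith [hlam.le]
  have htm : t m = lam := by
    simp only [ht]; exact mul_div_cancel_right₀ lam hm0'.ne'
  have ht0 : t 0 = 0 := by simp [ht]
  have htnn : ∀ j : ℕ, 0 ≤ t j := by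
    intro j; simp only [ht]; positivity
  -- per-step bound
  have hstep : ∀ j : ℕ, ∃ Mj : ℝ, j < m →
      ∀ g : C(X, ℝ), (∀ x, g x ∈ Set.Icc (t j) (t (j+1))) → V g ≤ Mj := by
    intro j
    by_cases hj : j < m
    · have htjm : t j ∈ Set.Icc (0:ℝ) lam := by
        refine ⟨htnn j, ?_⟩
        simp only [ht]
        rw [div_le_iff₀ hm0']
        have : (j:ℝ) ≤ (m:ℝ) := by exact_mod_cast hj.le
        nlinarith [hlam.le]
      obtain ⟨i, hi⟩ := hleb (t j) htjm
      refine ⟨V (ContinuousMap.const X (i:ℝ)) + 1, fun _ g hg => ?_⟩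
      have h1 : |t j - (i:ℝ)| < δf i := by
        have := hi (Metric.mem_ball_self hδ₀)
        simpa [Real.dist_eq] using this
      have h2 : |t (j+1) - (i:ℝ)| < δf i := by
        have hmem : t (j+1) ∈ Metric.ball (t j) δ₀ := by
          simp only [Metric.mem_ball, Real.dist_eq]
          have : t (j+1) - t j = lam / m := by
            simp only [ht]; push_cast; ring
          rw [abs_of_nonneg (by linarith [htmono j])]
          rw [this]; exact hmesh
        have := hi hmem
        simpa [Real.dist_eq] using this
      set ρ := max (|t j - (i:ℝ)|) (|t (j+1) - (i:ℝ)|) with hρ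
      have hρnn : 0 ≤ ρ := le_trans (abs_nonneg _) (le_max_left _ _)
      apply hMf i g
      · rw [ContinuousMap.le_def]
        intro a
        have := (hg a).1
        have := htnn j
        simpa using le_trans (htnn j) (hg a).1
      · have hd : dist g (ContinuousMap.const X (i:ℝ)) ≤ ρ := by
          rw [ContinuousMap.dist_le hρnn]
          intro x
          simp only [ContinuousMap.const_apply]
          rw [Real.dist_eq, abs_le]
          constructor
          · have := (hg x).1
            have h3 : (i:ℝ) - t j ≤ |t j - (i:ℝ)| := by
              rw [abs_sub_comm]; exact le_abs_self _
            have := le_max_left (|t j - (i:ℝ)|) (|t (j+1) - (i:ℝ)|)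
            linarith
          · have := (hg x).2
            have h3 : t (j+1) - (i:ℝ) ≤ |t (j+1) - (i:ℝ)| := le_abs_self _
            have := le_max_right (|t j - (i:ℝ)|) (|t (j+1) - (i:ℝ)|)
            linarith
        calc dist g (ContinuousMap.const X (i:ℝ)) ≤ ρ := hd
        _ < δf i := max_lt h1 h2
    · exact ⟨0, fun h => absurd h hj⟩
  choose M hM using hstep
  refine ⟨∑ i ∈ Finset.Ico 0 m, M i + V (ContinuousMap.const X lam), fun g hg => ?_⟩
  have hg0 : (0:C(X,ℝ)) ≤ g := by
    rw [ContinuousMap.le_def]; intro a; simpa using (hg a).1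
  have key : ∀ k, ∀ j, j + k = m →
      V (g ⊔ ContinuousMap.const X (t j)) ≤
        ∑ i ∈ Finset.Ico j m, M i + V (ContinuousMap.const X lam) := by
    intro k
    induction k with
    | zero =>
      intro j hj
      have hjm : j = m := by omega
      have : g ⊔ ContinuousMap.const X (t j) = ContinuousMap.const X lam := by
        ext x
        simp only [ContinuousMap.sup_apply, ContinuousMap.const_apply, hjm, htm]
        exact max_eq_right (hg x).2
      rw [this, hjm]
      simp
    | succ k ih =>
      intro j hj
      have hjm : j < m := by omega
      set A := g ⊔ ContinuousMap.const X (t j) with hA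
      set B := ContinuousMap.const X (t (j+1)) with hB
      have h0A : (0:C(X,ℝ)) ≤ A := by
        rw [ContinuousMap.le_def]; intro a
        simp only [hA, ContinuousMap.sup_apply, ContinuousMap.const_apply,
          ContinuousMap.zero_apply]
        exact le_trans (htnn j) (le_max_right _ _)
      have h0B : (0:C(X,ℝ)) ≤ B := by
        rw [ContinuousMap.le_def]; intro a
        simpa [hB] using htnn (j+1)
      have hsupAB : A ⊔ B = g ⊔ ContinuousMap.const X (t (j+1)) := by
        ext x
        simp only [hA, hB, ContinuousMap.sup_apply, ContinuousMap.const_apply]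
        rw [max_assoc, max_eq_right (htmono j)]
      have hinfAB : ∀ x, (A ⊓ B) x ∈ Set.Icc (t j) (t (j+1)) := by
        intro x
        simp only [hA, hB, ContinuousMap.inf_apply, ContinuousMap.sup_apply,
          ContinuousMap.const_apply]
        constructor
        · exact le_min (le_trans (le_max_right _ _) (le_refl _)) (htmono j)
        · exact min_le_right _ _
      have hVinf : V (A ⊓ B) ≤ M j := hM j hjm _ hinfAB
      have hvalAB := hval A B h0A h0B
      have hBpos := hpos B h0B
      have hsum : ∑ i ∈ Finset.Ico j m, M i
          = M j + ∑ i ∈ Finset.Ico (j+1) m, M i :=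
        Finset.sum_eq_sum_Ico_succ_bot hjm M
      have hih := ih (j+1) (by omega)
      rw [hsupAB] at hvalAB
      rw [hsum]
      linarith
  have hgt0 : g ⊔ ContinuousMap.const X (t 0) = g := by
    ext x
    simp only [ContinuousMap.sup_apply, ContinuousMap.const_apply, ht0]
    exact max_eq_left (hg x).1
  have := key m 0 (by omega)
  rw [hgt0] at this
  exact this


section Clamp

/-- clamp to [0,1] -/
noncomputable def cl01 (z : ℝ) : ℝ := max 0 (min 1 z)

lemma cl01_nonneg (z : ℝ) : 0 ≤ cl01 z := le_max_left _ _

lemma cl01_le_one (z : ℝ) : cl01 z ≤ 1 :=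
  max_le zero_le_one (min_le_left _ _)

lemma cl01_eq_one {z : ℝ} (h : 1 ≤ z) : cl01 z = 1 := by
  unfold cl01
  rw [min_eq_left h, max_eq_right zero_le_one]

lemma cl01_eq_zero {z : ℝ} (h : z ≤ 0) : cl01 z = 0 := by
  unfold cl01
  rw [max_eq_left (le_trans (min_le_right _ _) h)]

lemma lt_one_of_cl01_ne_one {z : ℝ} (h : cl01 z ≠ 1) : z < 1 := by
  by_contra hc
  exact h (cl01_eq_one (not_lt.1 hc))

end Clamp

variable {X : Type*} [MetricSpace X] [CompactSpace X]

set_option maxHeartbeats 2000000 in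
lemma super_lemma (V : C(X, ℝ) → ℝ)
    (hpos : ∀ f : C(X, ℝ), 0 ≤ f → 0 ≤ V f)
    (hval : ∀ f g : C(X, ℝ), 0 ≤ f → 0 ≤ g → V (f ⊔ g) + V (f ⊓ g) = V f + V g)
    (hzero : V 0 = 0)
    (lam : ℝ) (hlam : 0 < lam)
    (C : ℝ) (hC : ∀ g : C(X, ℝ), (∀ x, g x ∈ Set.Icc 0 lam) → V g ≤ C)
    (K₁ K₂ : Set X) (hK₁c : IsClosed K₁) (hK₂ : IsCompact K₂)
    (hK₁ne : K₁.Nonempty) (hK₂ne : K₂.Nonempty) (hdisj : Disjoint K₁ K₂)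
    (f : C(X, ℝ)) (hf1 : ∀ x, f x ∈ Set.Icc 0 lam) (hf2 : ∀ x ∈ K₁ ∪ K₂, f x = lam)
    (ε : ℝ) (hε : 0 < ε) :
    ∃ p q : C(X, ℝ),
      ((∀ x, p x ∈ Set.Icc 0 lam) ∧ ∀ x ∈ K₁, p x = lam) ∧
      ((∀ x, q x ∈ Set.Icc 0 lam) ∧ ∀ x ∈ K₂, q x = lam) ∧
      V p + V q ≤ V f + ε := by
  classical
  set u : X → ℝ := fun x => infDist x K₁ with hu
  have hucont : Continuous u := continuous_infDist_pt K₁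
  -- the positive distance between K₁ and K₂
  obtain ⟨x₀, hx₀K, hx₀min⟩ := hK₂.exists_isMinOn hK₂ne hucont.continuousOn
  set d : ℝ := u x₀ with hd
  have hdpos : 0 < d := by
    rw [hd, hu]
    rw [← hK₁c.notMem_iff_infDist_pos hK₁ne]
    exact fun hx => (Set.disjoint_left.1 hdisj hx) hx₀K
  have hdK₂ : ∀ x ∈ K₂, d ≤ u x := fun x hx => hx₀min hx
  have huK₁ : ∀ x ∈ K₁, u x = 0 := fun x hx => infDist_zero_of_mem hx
  have hunn : ∀ x, 0 ≤ u x := fun x => infDist_nonneg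
  -- choice of N
  set N : ℕ := ⌈C / ε⌉₊ + 1 with hN
  have hN1 : 1 ≤ N := Nat.le_add_left 1 _
  have hNC : C / ε < (N : ℝ) := by
    calc C / ε ≤ (⌈C / ε⌉₊ : ℝ) := Nat.le_ceil _
    _ < (N : ℝ) := by rw [hN]; push_cast; linarith
  have hNpos : (0:ℝ) < N := by positivity
  -- band geometry
  set β : ℝ := d / (2 * N) with hβ
  have hβpos : 0 < β := by positivity
  set r : ℝ := β / 4 with hr
  have hrpos : 0 < r := by positivity
  have hβ4r : β = 4 * r := by rw [hr]; ring
  set c : ℕ → ℝ := fun i => (2 * i + 1) * β with hc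
  have hcpos : ∀ i, 4 * r ≤ c i := by
    intro i
    simp only [hc]
    have h0 : (0:ℝ) ≤ (i:ℝ) := Nat.cast_nonneg i
    nlinarith [hβpos, mul_nonneg (by linarith : (0:ℝ) ≤ 2*(i:ℝ)) hβpos.le]
  have hcd : ∀ i, i < N → 4 * r ≤ d - c i := by
    intro i hi
    have hiN : (i:ℝ) + 1 ≤ N := by exact_mod_cast hi
    have hβd : d = 2 * N * β := by rw [hβ]; field_simp
    simp only [hc]
    rw [hβd]
    nlinarith [mul_nonneg (by linarith : (0:ℝ) ≤ (N:ℝ) - i - 1) hβpos.le]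
  have hnatsep : ∀ i j : ℕ, i ≠ j → (1:ℝ) ≤ |(i:ℝ) - (j:ℝ)| := by
    intro i j hij
    rcases Nat.lt_or_ge i j with h | h
    · have h' : (i:ℝ) + 1 ≤ j := by exact_mod_cast h
      rw [abs_sub_comm, abs_of_nonneg (by linarith)]
      linarith
    · have h2 : j < i := lt_of_le_of_ne h (Ne.symm hij)
      have h' : (j:ℝ) + 1 ≤ i := by exact_mod_cast h2
      rw [abs_of_nonneg (by linarith)]
      linarith
  -- the band profile functions
  set ψ : ℕ → ℝ → ℝ := fun i s => cl01 ((|s - c i| - r) / r) with hψ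
  have hψ_eq_one : ∀ i s, 2 * r ≤ |s - c i| → ψ i s = 1 := by
    intro i s h
    apply cl01_eq_one
    rw [le_div_iff₀ hrpos]
    linarith
  have hψ_eq_zero : ∀ i s, |s - c i| ≤ r → ψ i s = 0 := by
    intro i s h
    apply cl01_eq_zero
    apply div_nonpos_of_nonpos_of_nonneg (by linarith) hrpos.le
  have hψ_ne_one : ∀ i s, ψ i s ≠ 1 → |s - c i| < 2 * r := by
    intro i s h
    have := lt_one_of_cl01_ne_one h
    rw [div_lt_one hrpos] at this
    linarith
  have hψ01 : ∀ i s, ψ i s ∈ Set.Icc (0:ℝ) 1 := fun i s => ⟨cl01_nonneg _, cl01_le_one _⟩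
  -- separation of the bands
  have hband : ∀ i j : ℕ, i ≠ j → ∀ s : ℝ, ψ i s ≠ 1 → ψ j s = 1 := by
    intro i j hij s hi
    apply hψ_eq_one
    have h1 : |s - c i| < 2 * r := hψ_ne_one i s hi
    have h2 : (1:ℝ) ≤ |(i:ℝ) - (j:ℝ)| := hnatsep i j hij
    have hci : c i - c j = 2 * ((i:ℝ) - (j:ℝ)) * β := by
      simp only [hc]; push_cast; ring
    have habs2 : |c i - c j| = 2 * |(i:ℝ) - (j:ℝ)| * β := by
      rw [hci, abs_mul, abs_mul, abs_of_nonneg (by norm_num : (0:ℝ) ≤ 2),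
        abs_of_nonneg hβpos.le]
    have htri : |c i - c j| ≤ |c i - s| + |s - c j| := abs_sub_le _ _ _
    rw [abs_sub_comm (c i) s] at htri
    have hprod : 2 * β ≤ 2 * |(i:ℝ) - (j:ℝ)| * β := by
      nlinarith [mul_nonneg (sub_nonneg.2 h2) hβpos.le]
    linarith [hβ4r, habs2 ▸ le_trans hprod (le_of_eq habs2.symm)]
  -- scaled band bump functions
  have hhcont : ∀ i : ℕ, Continuous fun x : X => lam * ψ i (u x) := by
    intro i
    simp only [hψ, cl01]
    exact continuous_const.mul (continuous_const.max (continuous_const.min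
      (((hucont.sub continuous_const).abs.sub continuous_const).div_const r)))
  set hh : ℕ → C(X, ℝ) := fun i => ⟨fun x => lam * ψ i (u x), hhcont i⟩ with hhdef
  have hh_apply : ∀ i x, hh i x = lam * ψ i (u x) := fun i x => rfl
  have hh_nonneg : ∀ i x, 0 ≤ hh i x := fun i x => mul_nonneg hlam.le (hψ01 i (u x)).1
  have hh_le : ∀ i x, hh i x ≤ lam := by
    intro i x
    rw [hh_apply]
    nlinarith [(hψ01 i (u x)).2, (hψ01 i (u x)).1, hlam]
  have hh_ne : ∀ i x, hh i x ≠ lam → ψ i (u x) ≠ 1 := by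
    intro i x h hcon
    exact h (by rw [hh_apply, hcon, mul_one])
  -- iterated infima
  set H : ℕ → C(X, ℝ) :=
    fun k => Nat.rec (ContinuousMap.const X lam) (fun k Hk => Hk ⊓ hh k) k with hH
  have hH0 : H 0 = ContinuousMap.const X lam := rfl
  have hHsucc : ∀ k, H (k+1) = H k ⊓ hh k := fun k => rfl
  have hHnn : ∀ k x, 0 ≤ H k x := by
    intro k
    induction k with
    | zero => intro x; rw [hH0]; simpa using hlam.le
    | succ k ih =>
      intro x
      rw [hHsucc]
      simp only [ContinuousMap.inf_apply]
      exact le_min (ih x) (hh_nonneg k x)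
  have hHfull : ∀ k x, (∀ j, j < k → hh j x = lam) → H k x = lam := by
    intro k
    induction k with
    | zero => intro x _; rw [hH0]; simp
    | succ k ih =>
      intro x hx
      rw [hHsucc]
      simp only [ContinuousMap.inf_apply]
      rw [ih x (fun j hj => hx j (by omega)), hx k (by omega), min_self]
  have hdich : ∀ k x, H k x = lam ∨ hh k x = lam := by
    intro k x
    by_cases hall : ∀ j, j < k → hh j x = lam
    · exact Or.inl (hHfull k x hall)
    · push_neg at hall
      obtain ⟨j, hj, hne⟩ := hall
      right
      rw [hh_apply, hband j k (by omega) (u x) (hh_ne j x hne), mul_one]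
  have hfle : ∀ x, f x ≤ lam := fun x => (hf1 x).2
  have hfnn : ∀ x, 0 ≤ f x := fun x => (hf1 x).1
  -- telescoping identity
  have hkey : ∀ k, V (f ⊓ H k) + (k:ℝ) * V f
      = V f + ∑ j ∈ Finset.range k, V (f ⊓ hh j) := by
    intro k
    induction k with
    | zero =>
      have hfH : f ⊓ H 0 = f := by
        ext x
        rw [hH0]
        simp only [ContinuousMap.inf_apply, ContinuousMap.const_apply]
        exact min_eq_left (hfle x)
      rw [hfH]
      simp
    | succ k ih =>
      set A := f ⊓ H k with hA
      set B := f ⊓ hh k with hB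
      have h0A : (0:C(X,ℝ)) ≤ A := by
        rw [ContinuousMap.le_def]
        intro x
        simp only [hA, ContinuousMap.inf_apply, ContinuousMap.zero_apply]
        exact le_min (hfnn x) (hHnn k x)
      have h0B : (0:C(X,ℝ)) ≤ B := by
        rw [ContinuousMap.le_def]
        intro x
        simp only [hB, ContinuousMap.inf_apply, ContinuousMap.zero_apply]
        exact le_min (hfnn x) (hh_nonneg k x)
      have hsupAB : A ⊔ B = f := by
        ext x
        simp only [hA, hB, ContinuousMap.sup_apply, ContinuousMap.inf_apply]
        rw [← min_max_distrib_left]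
        apply min_eq_left
        rcases hdich k x with h | h
        · exact le_trans (hfle x) (le_trans (le_of_eq h.symm) (le_max_left _ _))
        · exact le_trans (hfle x) (le_trans (le_of_eq h.symm) (le_max_right _ _))
      have hinfAB : A ⊓ B = f ⊓ H (k+1) := by
        ext x
        rw [hHsucc]
        simp only [hA, hB, ContinuousMap.inf_apply]
        rw [min_min_min_comm, min_self]
      have hv := hval A B h0A h0B
      rw [hsupAB, hinfAB] at hv
      rw [Finset.sum_range_succ]
      push_cast
      linarith [ih, hv]
  -- a cheap band exists
  have hex : ∃ j, j < N ∧ V (f ⊓ hh j) ≤ V f + ε := by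
    by_contra hcon
    push_neg at hcon
    have hsum : ∀ j ∈ Finset.range N, V f + ε < V (f ⊓ hh j) :=
      fun j hj => hcon j (Finset.mem_range.1 hj)
    have hlt : (N:ℝ) * (V f + ε) < ∑ j ∈ Finset.range N, V (f ⊓ hh j) := by
      calc (N:ℝ) * (V f + ε) = ∑ _j ∈ Finset.range N, (V f + ε) := by
            rw [Finset.sum_const, Finset.card_range, nsmul_eq_mul]
      _ < _ := Finset.sum_lt_sum_of_nonempty ⟨0, Finset.mem_range.2 (by omega)⟩ hsum
    have hWC : V (f ⊓ H N) ≤ C := by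
      apply hC
      intro x
      simp only [ContinuousMap.inf_apply]
      exact ⟨le_min (hfnn x) (hHnn N x), le_trans (min_le_left _ _) (hfle x)⟩
    have hVf : 0 ≤ V f :=
      hpos f (by rw [ContinuousMap.le_def]; intro x; simpa using hfnn x)
    have hkeyN := hkey N
    have hCc : C < (N:ℝ) * ε := by
      have := (div_lt_iff₀ hε).1 hNC
      linarith
    linarith [hlt, hWC, hVf, hkeyN, hCc]
  obtain ⟨j, hjN, hVw⟩ := hex
  set w : C(X,ℝ) := f ⊓ hh j with hw
  have hw_apply : ∀ x, w x = min (f x) (hh j x) := by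
    intro x; simp [hw, ContinuousMap.inf_apply]
  have hw_nonneg : ∀ x, 0 ≤ w x := by
    intro x; rw [hw_apply]; exact le_min (hfnn x) (hh_nonneg j x)
  have hw_le : ∀ x, w x ≤ lam := by
    intro x; rw [hw_apply]; exact le_trans (min_le_left _ _) (hfle x)
  -- the gate functions
  have econt : Continuous fun x : X => lam * cl01 ((c j + r - u x) / r) := by
    simp only [cl01]
    exact continuous_const.mul (continuous_const.max (continuous_const.min
      ((continuous_const.sub hucont).div_const r)))
  have e'cont : Continuous fun x : X => lam * cl01 ((u x - (c j - r)) / r) := by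
    simp only [cl01]
    exact continuous_const.mul (continuous_const.max (continuous_const.min
      ((hucont.sub continuous_const).div_const r)))
  set e : C(X,ℝ) := ⟨fun x => lam * cl01 ((c j + r - u x) / r), econt⟩ with he
  set e' : C(X,ℝ) := ⟨fun x => lam * cl01 ((u x - (c j - r)) / r), e'cont⟩ with he'
  have e_apply : ∀ x, e x = lam * cl01 ((c j + r - u x) / r) := fun x => rfl
  have e'_apply : ∀ x, e' x = lam * cl01 ((u x - (c j - r)) / r) := fun x => rfl
  have e_nonneg : ∀ x, 0 ≤ e x := fun x => mul_nonneg hlam.le (cl01_nonneg _)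
  have e'_nonneg : ∀ x, 0 ≤ e' x := fun x => mul_nonneg hlam.le (cl01_nonneg _)
  have e_le : ∀ x, e x ≤ lam := by
    intro x; rw [e_apply]
    nlinarith [cl01_le_one ((c j + r - u x) / r), cl01_nonneg ((c j + r - u x) / r)]
  have e'_le : ∀ x, e' x ≤ lam := by
    intro x; rw [e'_apply]
    nlinarith [cl01_le_one ((u x - (c j - r)) / r), cl01_nonneg ((u x - (c j - r)) / r)]
  have e_eq_lam : ∀ x, u x ≤ c j → e x = lam := by
    intro x hx
    rw [e_apply, cl01_eq_one (by rw [le_div_iff₀ hrpos]; linarith), mul_one]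
  have e_eq_zero : ∀ x, c j + r ≤ u x → e x = 0 := by
    intro x hx
    rw [e_apply, cl01_eq_zero (div_nonpos_of_nonpos_of_nonneg (by linarith) hrpos.le),
      mul_zero]
  have e'_eq_lam : ∀ x, c j ≤ u x → e' x = lam := by
    intro x hx
    rw [e'_apply, cl01_eq_one (by rw [le_div_iff₀ hrpos]; linarith), mul_one]
  have e'_eq_zero : ∀ x, u x ≤ c j - r → e' x = 0 := by
    intro x hx
    rw [e'_apply, cl01_eq_zero (div_nonpos_of_nonpos_of_nonneg (by linarith) hrpos.le),
      mul_zero]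
  set p : C(X,ℝ) := w ⊓ e with hp
  set q : C(X,ℝ) := w ⊓ e' with hq
  have hp_apply : ∀ x, p x = min (w x) (e x) := by
    intro x; simp [hp, ContinuousMap.inf_apply]
  have hq_apply : ∀ x, q x = min (w x) (e' x) := by
    intro x; simp [hq, ContinuousMap.inf_apply]
  have h0p : (0:C(X,ℝ)) ≤ p := by
    rw [ContinuousMap.le_def]
    intro x
    simp only [ContinuousMap.zero_apply]
    rw [hp_apply]
    exact le_min (hw_nonneg x) (e_nonneg x)
  have h0q : (0:C(X,ℝ)) ≤ q := by
    rw [ContinuousMap.le_def]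
    intro x
    simp only [ContinuousMap.zero_apply]
    rw [hq_apply]
    exact le_min (hw_nonneg x) (e'_nonneg x)
  -- p ⊓ q = 0
  have hpq_inf : p ⊓ q = 0 := by
    ext x
    simp only [ContinuousMap.inf_apply, ContinuousMap.zero_apply]
    rw [hp_apply, hq_apply]
    by_cases h1 : |u x - c j| ≤ r
    · have hwx : w x = 0 := by
        rw [hw_apply, hh_apply, hψ_eq_zero j (u x) h1, mul_zero]
        exact min_eq_right (hfnn x)
      rw [hwx, min_eq_left (e_nonneg x), min_eq_left (e'_nonneg x), min_self]
    · push_neg at h1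
      rcases le_total (u x) (c j) with h2 | h2
      · have : u x ≤ c j - r := by
          rw [abs_sub_comm, abs_of_nonneg (by linarith)] at h1
          linarith
        rw [e'_eq_zero x this, min_eq_right (hw_nonneg x), min_eq_right
          (le_min (hw_nonneg x) (e_nonneg x))]
      · have : c j + r ≤ u x := by
          rw [abs_of_nonneg (by linarith)] at h1
          linarith
        rw [e_eq_zero x this, min_eq_right (hw_nonneg x), min_eq_left
          (le_min (hw_nonneg x) (e'_nonneg x))]
  -- p ⊔ q = w
  have hpq_sup : p ⊔ q = w := by
    ext x
    simp only [ContinuousMap.sup_apply]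
    rw [hp_apply, hq_apply, ← min_max_distrib_left]
    apply min_eq_left
    rcases le_total (u x) (c j) with h2 | h2
    · exact le_trans (hw_le x) (le_trans (le_of_eq (e_eq_lam x h2).symm) (le_max_left _ _))
    · exact le_trans (hw_le x) (le_trans (le_of_eq (e'_eq_lam x h2).symm) (le_max_right _ _))
  -- valuation computation
  have hv := hval p q h0p h0q
  rw [hpq_sup, hpq_inf, hzero] at hv
  refine ⟨p, q, ⟨?_, ?_⟩, ⟨?_, ?_⟩, ?_⟩
  · intro x
    rw [hp_apply]
    exact ⟨le_min (hw_nonneg x) (e_nonneg x), le_trans (min_le_left _ _) (hw_le x)⟩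
  · intro x hx
    have hu0 : u x = 0 := huK₁ x hx
    have hhj : hh j x = lam := by
      rw [hh_apply, hψ_eq_one j (u x) (by
        rw [hu0, zero_sub, abs_neg, abs_of_nonneg (by linarith [hcpos j, hrpos])]
        linarith [hcpos j, hrpos]), mul_one]
    have hfx : f x = lam := hf2 x (Or.inl hx)
    rw [hp_apply, hw_apply, hfx, hhj, min_self, e_eq_lam x (by rw [hu0]; linarith [hcpos j, hrpos]),
      min_self]
  · intro x
    rw [hq_apply]
    exact ⟨le_min (hw_nonneg x) (e'_nonneg x), le_trans (min_le_left _ _) (hw_le x)⟩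
  · intro x hx
    have hud : d ≤ u x := hdK₂ x hx
    have hcj : 4 * r ≤ d - c j := hcd j hjN
    have hhj : hh j x = lam := by
      rw [hh_apply, hψ_eq_one j (u x) (by
        rw [abs_of_nonneg (by linarith)]
        linarith), mul_one]
    have hfx : f x = lam := hf2 x (Or.inr hx)
    rw [hq_apply, hw_apply, hfx, hhj, min_self, e'_eq_lam x (by linarith), min_self]
  · linarith [hVw, hv]


/-- `ζ_λ` is a content: nonnegative, finite (bounded by `V(λ𝟙)`),
monotone, subadditive, and additive on disjoint compact sets. -/
theorem stmt13 {n : ℕ} (hn : 2 ≤ n) (V : C(Sph n, ℝ) → ℝ)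
    (hpos : ∀ f : C(Sph n, ℝ), 0 ≤ f → 0 ≤ V f)
    (hval : ∀ f g : C(Sph n, ℝ), 0 ≤ f → 0 ≤ g →
      V (f ⊔ g) + V (f ⊓ g) = V f + V g)
    (hcont : ContinuousOn V {f : C(Sph n, ℝ) | 0 ≤ f})
    (hrot : ∀ φ : EuclideanSpace ℝ (Fin n) ≃ₗᵢ[ℝ] EuclideanSpace ℝ (Fin n), IsRotation φ →
      ∀ f : C(Sph n, ℝ), 0 ≤ f → V (f.comp (rotMap φ)) = V f)
    (hzero : V 0 = 0) (lam : ℝ) (hlam : 0 < lam) :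
    (∀ K : Set (Sph n), IsCompact K →
      0 ≤ zeta V lam K ∧ zeta V lam K ≤ V (ContinuousMap.const (Sph n) lam)) ∧
    (∀ K₁ K₂ : Set (Sph n), IsCompact K₁ → IsCompact K₂ → K₁ ⊆ K₂ →
      zeta V lam K₁ ≤ zeta V lam K₂) ∧
    (∀ K₁ K₂ : Set (Sph n), IsCompact K₁ → IsCompact K₂ →
      zeta V lam (K₁ ∪ K₂) ≤ zeta V lam K₁ + zeta V lam K₂) ∧
    (∀ K₁ K₂ : Set (Sph n), IsCompact K₁ → IsCompact K₂ → Disjoint K₁ K₂ →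
      zeta V lam (K₁ ∪ K₂) = zeta V lam K₁ + zeta V lam K₂) := by
  classical
  obtain ⟨C, hC⟩ := bound_lemma V hpos hval hcont lam hlam
  set A : Set (Sph n) → Set C(Sph n, ℝ) :=
    fun K => {f : C(Sph n, ℝ) | (∀ x, f x ∈ Set.Icc 0 lam) ∧ ∀ x ∈ K, f x = lam} with hA
  have hzeta : ∀ K, zeta V lam K = sInf (V '' A K) := fun K => rfl
  have hconstmem : ∀ K : Set (Sph n), (ContinuousMap.const (Sph n) lam) ∈ A K := by
    intro K
    constructor
    · intro x
      simp only [ContinuousMap.const_apply]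
      exact ⟨hlam.le, le_refl lam⟩
    · intro x _
      simp
  have hne : ∀ K : Set (Sph n), (V '' A K).Nonempty :=
    fun K => ⟨V (ContinuousMap.const (Sph n) lam),
      Set.mem_image_of_mem V (hconstmem K)⟩
  have hadm0 : ∀ (K : Set (Sph n)) (f : C(Sph n, ℝ)), f ∈ A K → (0:C(Sph n,ℝ)) ≤ f := by
    intro K f hf
    rw [ContinuousMap.le_def]
    intro x
    simpa using (hf.1 x).1
  have hbdd : ∀ K : Set (Sph n), BddBelow (V '' A K) := by
    intro K
    refine ⟨0, ?_⟩
    rintro b ⟨f, hf, rfl⟩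
    exact hpos f (hadm0 K f hf)
  have hnn : ∀ K : Set (Sph n), 0 ≤ zeta V lam K := by
    intro K
    rw [hzeta]
    apply le_csInf (hne K)
    rintro b ⟨f, hf, rfl⟩
    exact hpos f (hadm0 K f hf)
  have hfin : ∀ K : Set (Sph n), zeta V lam K ≤ V (ContinuousMap.const (Sph n) lam) := by
    intro K
    rw [hzeta]
    exact csInf_le (hbdd K) (Set.mem_image_of_mem V (hconstmem K))
  have hmono : ∀ K₁ K₂ : Set (Sph n), K₁ ⊆ K₂ → zeta V lam K₁ ≤ zeta V lam K₂ := by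
    intro K₁ K₂ hsub
    rw [hzeta, hzeta]
    apply csInf_le_csInf (hbdd K₁) (hne K₂)
    apply Set.image_mono
    rintro f ⟨hf1, hf2⟩
    exact ⟨hf1, fun x hx => hf2 x (hsub hx)⟩
  have hsupmem : ∀ (K₁ K₂ : Set (Sph n)) (f₁ f₂ : C(Sph n, ℝ)), f₁ ∈ A K₁ → f₂ ∈ A K₂ →
      (f₁ ⊔ f₂) ∈ A (K₁ ∪ K₂) := by
    intro K₁ K₂ f₁ f₂ hf₁ hf₂
    constructor
    · intro x
      simp only [ContinuousMap.sup_apply]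
      exact ⟨le_trans (hf₁.1 x).1 (le_max_left _ _), max_le (hf₁.1 x).2 (hf₂.1 x).2⟩
    · intro x hx
      simp only [ContinuousMap.sup_apply]
      rcases hx with hx | hx
      · rw [hf₁.2 x hx]
        exact max_eq_left (hf₂.1 x).2
      · rw [hf₂.2 x hx]
        exact max_eq_right (hf₁.1 x).2
  have hsubadd : ∀ K₁ K₂ : Set (Sph n),
      zeta V lam (K₁ ∪ K₂) ≤ zeta V lam K₁ + zeta V lam K₂ := by
    intro K₁ K₂
    apply le_of_forall_pos_le_add
    intro ε hε
    obtain ⟨b₁, hb₁mem, hb₁⟩ := exists_lt_of_csInf_lt (hne K₁)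
      (lt_add_of_pos_right (sInf (V '' A K₁)) (half_pos hε))
    obtain ⟨b₂, hb₂mem, hb₂⟩ := exists_lt_of_csInf_lt (hne K₂)
      (lt_add_of_pos_right (sInf (V '' A K₂)) (half_pos hε))
    obtain ⟨f₁, hf₁, rfl⟩ := hb₁mem
    obtain ⟨f₂, hf₂, rfl⟩ := hb₂mem
    have hmem := hsupmem K₁ K₂ f₁ f₂ hf₁ hf₂
    have hv := hval f₁ f₂ (hadm0 K₁ f₁ hf₁) (hadm0 K₂ f₂ hf₂)
    have hinfpos : 0 ≤ V (f₁ ⊓ f₂) := by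
      apply hpos
      rw [ContinuousMap.le_def]
      intro x
      simp only [ContinuousMap.inf_apply, ContinuousMap.zero_apply]
      exact le_min (by simpa using (hf₁.1 x).1) (by simpa using (hf₂.1 x).1)
    have h1 : zeta V lam (K₁ ∪ K₂) ≤ V (f₁ ⊔ f₂) := by
      rw [hzeta]
      exact csInf_le (hbdd _) (Set.mem_image_of_mem V hmem)
    linarith [hzeta K₁, hzeta K₂]
  have hzempty : zeta V lam ∅ = 0 := by
    rw [hzeta]
    apply le_antisymm
    · apply csInf_le (hbdd ∅)
      refine ⟨0, ⟨?_, fun x hx => absurd hx (Set.notMem_empty x)⟩, hzero⟩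
      intro x
      simp [hlam.le]
    · simpa [hzeta] using hnn ∅
  have hadd : ∀ K₁ K₂ : Set (Sph n), IsCompact K₁ → IsCompact K₂ → Disjoint K₁ K₂ →
      zeta V lam (K₁ ∪ K₂) = zeta V lam K₁ + zeta V lam K₂ := by
    intro K₁ K₂ hc₁ hc₂ hdisj
    refine le_antisymm (hsubadd K₁ K₂) ?_
    by_cases hK₁e : K₁ = ∅
    · rw [hK₁e, hzempty, Set.empty_union, zero_add]
    by_cases hK₂e : K₂ = ∅
    · rw [hK₂e, hzempty, Set.union_empty, add_zero]
    have hK₁ne : K₁.Nonempty := Set.nonempty_iff_ne_empty.2 hK₁e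
    have hK₂ne : K₂.Nonempty := Set.nonempty_iff_ne_empty.2 hK₂e
    rw [hzeta (K₁ ∪ K₂)]
    apply le_csInf (hne (K₁ ∪ K₂))
    rintro b ⟨f, ⟨hf1, hf2⟩, rfl⟩
    apply le_of_forall_pos_le_add
    intro ε hε
    obtain ⟨p, q, hpadm, hqadm, hpq⟩ := super_lemma V hpos hval hzero lam hlam C hC
      K₁ K₂ hc₁.isClosed hc₂ hK₁ne hK₂ne hdisj f hf1 hf2 ε hε
    have hzp : zeta V lam K₁ ≤ V p := by
      rw [hzeta]
      exact csInf_le (hbdd K₁) (Set.mem_image_of_mem V hpadm)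
    have hzq : zeta V lam K₂ ≤ V q := by
      rw [hzeta]
      exact csInf_le (hbdd K₂) (Set.mem_image_of_mem V hqadm)
    linarith
  exact ⟨fun K _ => ⟨hnn K, hfin K⟩, fun K₁ K₂ _ _ hsub => hmono K₁ K₂ hsub,
    fun K₁ K₂ _ _ => hsubadd K₁ K₂, hadd⟩
end
end

section
/- Let Ṽ : C(S^{n-1})⁺ → [0,∞) be a positive, rotation invariant, radial continuous valuation with Ṽ(0) = 0, let λ > 0, and let ζ_λ be defined on compact subsets of S^{n-1} by ζ_λ(K) = inf{Ṽ(f) : f : S^{n-1} → [0,λ] continuous, f = λ on K}. Then ζ_λ is a regular content: for every compact set K ⊆ S^{n-1}, ζ_λ(K) = inf{ζ_λ(D) : D ⊆ S^{n-1} compact, K ⊆ interior(D)}. -/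
open MeasureTheory Metric Set
open scoped ENNReal

noncomputable section

lemma zeta_bdd {n : ℕ} (V : C(Sph n, ℝ) → ℝ)
    (hpos : ∀ f : C(Sph n, ℝ), 0 ≤ f → 0 ≤ V f) (lam : ℝ) (K : Set (Sph n)) :
    BddBelow (V '' {f : C(Sph n, ℝ) | (∀ x, f x ∈ Set.Icc 0 lam) ∧ ∀ x ∈ K, f x = lam}) := by
  refine ⟨0, ?_⟩
  rintro v ⟨f, ⟨hf1, _⟩, rfl⟩
  exact hpos f (ContinuousMap.le_def.mpr fun x => (hf1 x).1)

lemma zeta_mem_const {n : ℕ} (lam : ℝ) (hlam : 0 ≤ lam) (K : Set (Sph n)) :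
    (ContinuousMap.const (Sph n) lam) ∈
      {f : C(Sph n, ℝ) | (∀ x, f x ∈ Set.Icc 0 lam) ∧ ∀ x ∈ K, f x = lam} :=
  ⟨fun _ => ⟨hlam, le_rfl⟩, fun _ _ => rfl⟩

lemma zeta_mono {n : ℕ} (V : C(Sph n, ℝ) → ℝ)
    (hpos : ∀ f : C(Sph n, ℝ), 0 ≤ f → 0 ≤ V f) (lam : ℝ) (hlam : 0 ≤ lam)
    {K D : Set (Sph n)} (h : K ⊆ D) : zeta V lam K ≤ zeta V lam D := by
  refine csInf_le_csInf (zeta_bdd V hpos lam K)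
    ⟨_, Set.mem_image_of_mem V (zeta_mem_const lam hlam D)⟩ ?_
  apply Set.image_mono
  rintro f ⟨hf1, hf2⟩
  exact ⟨hf1, fun x hx => hf2 x (h hx)⟩

theorem stmt14' {n : ℕ} (V : C(Sph n, ℝ) → ℝ)
    (hpos : ∀ f : C(Sph n, ℝ), 0 ≤ f → 0 ≤ V f)
    (hcont : ContinuousOn V {f : C(Sph n, ℝ) | 0 ≤ f})
    (lam : ℝ) (hlam : 0 < lam)
    (K : Set (Sph n)) :
    zeta V lam K =
      sInf (zeta V lam '' {D : Set (Sph n) | IsCompact D ∧ K ⊆ interior D}) := by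
  have hRHSne : (zeta V lam '' {D : Set (Sph n) | IsCompact D ∧ K ⊆ interior D}).Nonempty :=
    ⟨zeta V lam Set.univ, Set.mem_image_of_mem _ ⟨isCompact_univ, by simp⟩⟩
  refine le_antisymm (le_csInf hRHSne ?_) ?_
  · rintro v ⟨D, ⟨_, hKD⟩, rfl⟩
    exact zeta_mono V hpos lam hlam.le (hKD.trans interior_subset)
  · refine le_of_forall_pos_le_add fun ε hε => ?_
    -- pick f almost optimal for K
    have hSne : (V '' {f : C(Sph n, ℝ) | (∀ x, f x ∈ Set.Icc 0 lam) ∧ ∀ x ∈ K, f x = lam}).Nonempty :=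
      ⟨_, Set.mem_image_of_mem V (zeta_mem_const lam hlam.le K)⟩
    obtain ⟨v, hvmem, hvlt⟩ := exists_lt_of_csInf_lt hSne
      (lt_add_of_pos_right (zeta V lam K) (by positivity : (0:ℝ) < ε/2))
    obtain ⟨f, ⟨hf1, hf2⟩, rfl⟩ := hvmem
    have hf0 : (0 : C(Sph n, ℝ)) ≤ f := ContinuousMap.le_def.mpr fun x => (hf1 x).1
    -- continuity of V at f within the cone
    have hCWA : ContinuousWithinAt V {f : C(Sph n, ℝ) | 0 ≤ f} f := hcont f hf0
    rw [Metric.continuousWithinAt_iff] at hCWA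
    obtain ⟨δ, hδ, hδ'⟩ := hCWA (ε/2) (by positivity)
    set t : ℝ := min 1 (δ / (2 * lam)) with ht
    have ht0 : 0 < t := lt_min one_pos (by positivity)
    have htlam : t * lam < δ := by
      calc t * lam ≤ (δ / (2 * lam)) * lam := by
            exact mul_le_mul_of_nonneg_right (min_le_right _ _) hlam.le
        _ = δ / 2 := by field_simp
        _ < δ := by linarith
    set g : C(Sph n, ℝ) := (ContinuousMap.const (Sph n) lam) ⊓ ((1 + t) • f) with hg
    have hgx : ∀ x, g x = min lam ((1 + t) * f x) := fun x => rfl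
    have hfle : ∀ x, f x ≤ g x := by
      intro x
      rw [hgx, le_min_iff]
      refine ⟨(hf1 x).2, ?_⟩
      nlinarith [(hf1 x).1]
    have hgle : ∀ x, g x ≤ (1 + t) * f x := fun x => min_le_right _ _
    have hg0 : (0 : C(Sph n, ℝ)) ≤ g := ContinuousMap.le_def.mpr fun x =>
      le_trans (by simpa using (hf1 x).1) (hfle x)
    have hdist : dist g f < δ := by
      refine lt_of_le_of_lt ?_ htlam
      rw [ContinuousMap.dist_le (by positivity)]
      intro x
      rw [Real.dist_eq, abs_le]
      constructor
      · nlinarith [hfle x, hgle x, (hf1 x).1, (hf1 x).2]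
      · nlinarith [hfle x, hgle x, (hf1 x).1, (hf1 x).2]
    have hVg : V g < V f + ε/2 := by
      have := hδ' hg0 hdist
      rw [Real.dist_eq, abs_lt] at this
      linarith [this.1, this.2]
    -- the compact neighborhood D
    set D : Set (Sph n) := {x | lam ≤ (1 + t) * f x} with hD
    have hDclosed : IsClosed D := by
      have : D = (fun x => (1 + t) * f x) ⁻¹' Set.Ici lam := rfl
      rw [this]
      exact isClosed_Ici.preimage (continuous_const.mul f.continuous)
    have hDcompact : IsCompact D := hDclosed.isCompact
    have hKint : K ⊆ interior D := by
      have hU : IsOpen {x : Sph n | lam < (1 + t) * f x} := by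
        have : {x : Sph n | lam < (1 + t) * f x} = (fun x => (1 + t) * f x) ⁻¹' Set.Ioi lam := rfl
        rw [this]
        exact isOpen_Ioi.preimage (continuous_const.mul f.continuous)
      refine subset_trans ?_ (hU.subset_interior_iff.mpr fun x hx => show lam ≤ (1 + t) * f x from le_of_lt hx)
      intro x hx
      have : f x = lam := hf2 x hx
      simp only [Set.mem_setOf_eq, this]
      nlinarith
    -- g witnesses ζ(D) ≤ V g
    have hgmem : g ∈ {h : C(Sph n, ℝ) | (∀ x, h x ∈ Set.Icc 0 lam) ∧ ∀ x ∈ D, h x = lam} := by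
      constructor
      · intro x
        exact ⟨le_trans (hf1 x).1 (hfle x), min_le_left _ _⟩
      · intro x hx
        rw [hgx, min_eq_left hx]
    have hzD : zeta V lam D ≤ V g :=
      csInf_le (zeta_bdd V hpos lam D) (Set.mem_image_of_mem V hgmem)
    calc sInf (zeta V lam '' {D : Set (Sph n) | IsCompact D ∧ K ⊆ interior D})
        ≤ zeta V lam D := csInf_le ⟨0, by
            rintro w ⟨E, ⟨_, _⟩, rfl⟩
            exact le_csInf ⟨_, Set.mem_image_of_mem V (zeta_mem_const lam hlam.le E)⟩
              (by rintro w ⟨h, ⟨hh1, _⟩, rfl⟩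
                  exact hpos h (ContinuousMap.le_def.mpr fun x => (hh1 x).1))⟩
          (Set.mem_image_of_mem _ ⟨hDcompact, hKint⟩)
      _ ≤ V g := hzD
      _ ≤ V f + ε/2 := hVg.le
      _ ≤ zeta V lam K + ε := by linarith

/-- the content `ζ_λ` is regular:
`ζ_λ(K) = inf{ζ_λ(D) : D compact, K ⊆ interior(D)}`. -/
theorem stmt14 {n : ℕ} (hn : 2 ≤ n) (V : C(Sph n, ℝ) → ℝ)
    (hpos : ∀ f : C(Sph n, ℝ), 0 ≤ f → 0 ≤ V f)
    (hval : ∀ f g : C(Sph n, ℝ), 0 ≤ f → 0 ≤ g →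
      V (f ⊔ g) + V (f ⊓ g) = V f + V g)
    (hcont : ContinuousOn V {f : C(Sph n, ℝ) | 0 ≤ f})
    (hrot : ∀ φ : EuclideanSpace ℝ (Fin n) ≃ₗᵢ[ℝ] EuclideanSpace ℝ (Fin n), IsRotation φ →
      ∀ f : C(Sph n, ℝ), 0 ≤ f → V (f.comp (rotMap φ)) = V f)
    (hzero : V 0 = 0) (lam : ℝ) (hlam : 0 < lam)
    (K : Set (Sph n)) (hK : IsCompact K) :
    zeta V lam K =
      sInf (zeta V lam '' {D : Set (Sph n) | IsCompact D ∧ K ⊆ interior D}) :=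
  stmt14' V hpos hcont lam hlam K
end
end

section
/- Let Ṽ : C(S^{n-1})⁺ → [0,∞) be a positive, rotation invariant, radial continuous valuation with Ṽ(0) = 0, let λ > 0, and suppose ϑ_λ > 0 is a constant such that Ṽ(g) ≤ ϑ_λ · m(U) for every open set U ⊆ S^{n-1} and every g ∈ C(S^{n-1})⁺ with ‖g‖_∞ ≤ λ and supp(g) ⊆ U. Define ζ_λ(K) = inf{Ṽ(f) : f : S^{n-1} → [0,λ] continuous, f = λ on K} for compact K. Then for every compact set K ⊆ S^{n-1}, every ε > 0, every open set G ⊇ K with m(G \ K) ≤ ε/(4ϑ_λ), and every continuous f : S^{n-1} → [0,λ] with f = λ on K and supp(f) ⊆ G, one has Ṽ(f) ≤ ζ_λ(K) + ε. -/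
open MeasureTheory Metric Set
open scoped ENNReal

noncomputable section

/-- Auxiliary construction: given `a, b : C(X, ℝ)` with values in `[0, lam]` and `δ > 0`,
there is a continuous `w` with `0 ≤ w ≤ b`, such that `w` vanishes where `b ≤ a + δ/2`,
and `a ⊔ w` is uniformly `δ`-close to `a ⊔ b`. -/
theorem cut_spec {X : Type*} [TopologicalSpace X] (a b : C(X, ℝ)) (lam δ : ℝ)
    (hδ : 0 < δ) (hlam : 0 < lam) (hb : ∀ x, b x ∈ Set.Icc 0 lam) :
    ∃ w : C(X, ℝ), (0 : C(X, ℝ)) ≤ w ∧ (∀ x, w x ≤ b x) ∧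
      (∀ x, w x ≠ 0 → 0 < b x ∧ a x + δ / 2 < b x) ∧
      (∀ x, |(a ⊔ w) x - (a ⊔ b) x| ≤ δ) := by
  set c : ℝ := 2 * lam / δ with hc
  have hc0 : 0 < c := by positivity
  refine ⟨b ⊓ (c • ((b - a - ContinuousMap.const X (δ / 2)) ⊔ 0)), ?_, ?_, ?_, ?_⟩
  · rw [ContinuousMap.le_def]
    intro x
    simp only [ContinuousMap.zero_apply, ContinuousMap.inf_apply, ContinuousMap.sup_apply,
      ContinuousMap.smul_apply, ContinuousMap.sub_apply, ContinuousMap.const_apply,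
      smul_eq_mul]
    exact le_min (hb x).1 (by positivity)
  · intro x
    simp only [ContinuousMap.inf_apply]
    exact min_le_left _ _
  · intro x hx
    simp only [ContinuousMap.inf_apply, ContinuousMap.sup_apply, ContinuousMap.smul_apply,
      ContinuousMap.sub_apply, ContinuousMap.const_apply, ContinuousMap.zero_apply,
      smul_eq_mul] at hx
    have h1 : 0 ≤ min (b x) (c * max (b x - a x - δ / 2) 0) :=
      le_min (hb x).1 (by positivity)
    have h2 : 0 < min (b x) (c * max (b x - a x - δ / 2) 0) := lt_of_le_of_ne h1 (Ne.symm hx)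
    have hbx : 0 < b x := lt_of_lt_of_le h2 (min_le_left _ _)
    have h3 : 0 < c * max (b x - a x - δ / 2) 0 := lt_of_lt_of_le h2 (min_le_right _ _)
    have h5 : 0 < b x - a x - δ / 2 := by
      rcases le_or_gt (b x - a x - δ / 2) 0 with hcon | hok
      · exfalso
        rw [max_eq_right hcon, mul_zero] at h3
        exact lt_irrefl 0 h3
      · exact hok
    exact ⟨hbx, by linarith⟩
  · intro x
    simp only [ContinuousMap.sup_apply, ContinuousMap.inf_apply, ContinuousMap.smul_apply,
      ContinuousMap.sub_apply, ContinuousMap.const_apply, ContinuousMap.zero_apply,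
      smul_eq_mul]
    set A := a x
    set B := b x
    set s := c * max (B - A - δ / 2) 0 with hs
    have hwB : min B s ≤ B := min_le_left _ _
    rcases le_total B A with hBA | hAB
    · rw [max_eq_left (le_trans hwB hBA), max_eq_left hBA]
      simp [abs_of_nonneg, le_refl, hδ.le]
    · rw [max_eq_right hAB]
      rcases le_or_gt (A + δ) B with hfar | hnear
      · have hmax : max (B - A - δ / 2) 0 = B - A - δ / 2 := max_eq_left (by linarith)
        have hsge : lam ≤ s := by
          rw [hs, hmax]
          have h1 : c * (δ / 2) ≤ c * (B - A - δ / 2) :=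
            mul_le_mul_of_nonneg_left (by linarith) hc0.le
          have h2 : c * (δ / 2) = lam := by
            rw [hc]
            field_simp
          linarith
        have : min B s = B := min_eq_left (le_trans (hb x).2 hsge)
        rw [this, max_eq_right hAB]
        simp [hδ.le]
      · have hup : max A (min B s) ≤ B := max_le hAB hwB
        have hlo : A ≤ max A (min B s) := le_max_left _ _
        rw [abs_le]
        constructor <;> linarith

/-- if `m(G \ K) ≤ ε/(4ϑ_λ)` and `f : S^{n-1} → [0,λ]` equals `λ` on the
compact set `K` and is supported in the open set `G ⊇ K`, then `V(f) ≤ ζ_λ(K) + ε`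
(by the paper's construction `ζ_λ(K) = ν_λ(K)`). -/
theorem stmt15 {n : ℕ} (hn : 2 ≤ n) (V : C(Sph n, ℝ) → ℝ)
    (hpos : ∀ f : C(Sph n, ℝ), 0 ≤ f → 0 ≤ V f)
    (hval : ∀ f g : C(Sph n, ℝ), 0 ≤ f → 0 ≤ g →
      V (f ⊔ g) + V (f ⊓ g) = V f + V g)
    (hcont : ContinuousOn V {f : C(Sph n, ℝ) | 0 ≤ f})
    (hrot : ∀ φ : EuclideanSpace ℝ (Fin n) ≃ₗᵢ[ℝ] EuclideanSpace ℝ (Fin n), IsRotation φ →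
      ∀ f : C(Sph n, ℝ), 0 ≤ f → V (f.comp (rotMap φ)) = V f)
    (hzero : V 0 = 0) (lam : ℝ) (hlam : 0 < lam)
    (θlam : ℝ) (hθlam : 0 < θlam)
    (hbound : ∀ U : Set (Sph n), IsOpen U → ∀ g : C(Sph n, ℝ), 0 ≤ g → ‖g‖ ≤ lam →
      tsupport ⇑g ⊆ U → V g ≤ θlam * (sphMeasure n U).toReal)
    (K : Set (Sph n)) (hK : IsCompact K) (ε : ℝ) (hε : 0 < ε)
    (G : Set (Sph n)) (hG : IsOpen G) (hKG : K ⊆ G)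
    (hm : (sphMeasure n (G \ K)).toReal ≤ ε / (4 * θlam))
    (f : C(Sph n, ℝ)) (hf0 : ∀ x, f x ∈ Set.Icc 0 lam)
    (hfK : ∀ x ∈ K, f x = lam) (hfG : tsupport ⇑f ⊆ G) :
    V f ≤ zeta V lam K + ε := by
  classical
  have hfin : IsFiniteMeasure (sphMeasure n) := by unfold sphMeasure; infer_instance
  set m' : ℝ := (sphMeasure n (G \ K)).toReal with hm'def
  have hm'0 : 0 ≤ m' := ENNReal.toReal_nonneg
  have hθm' : θlam * m' ≤ ε / 4 := by
    have := mul_le_mul_of_nonneg_left hm hθlam.le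
    calc θlam * m' ≤ θlam * (ε / (4 * θlam)) := this
    _ = ε / 4 := by field_simp
  have hf0' : (0 : C(Sph n, ℝ)) ≤ f := ContinuousMap.le_def.mpr fun x => (hf0 x).1
  -- the main estimate, for each competitor h
  have main : ∀ h : C(Sph n, ℝ), (∀ x, h x ∈ Set.Icc 0 lam) → (∀ x ∈ K, h x = lam) →
      V f ≤ V h + ε := by
    intro h hh1 hh2
    have hh0 : (0 : C(Sph n, ℝ)) ≤ h := ContinuousMap.le_def.mpr fun x => (hh1 x).1
    set p : C(Sph n, ℝ) := f ⊔ h with hpdef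
    have hp0 : (0 : C(Sph n, ℝ)) ≤ p := le_trans hf0' le_sup_left
    have hcontp : ContinuousWithinAt V {g : C(Sph n, ℝ) | 0 ≤ g} p := hcont p hp0
    rw [Metric.continuousWithinAt_iff] at hcontp
    obtain ⟨δ₀, hδ₀, Hcont⟩ := hcontp (ε / 8) (by linarith)
    set δ : ℝ := δ₀ / 2 with hδdef
    have hδ : 0 < δ := by positivity
    -- chain 1 : V f ≤ V (f ⊔ h) + θ m' + ε/8
    obtain ⟨w1, hw1_0, hw1_le, hw1_ne, hw1_dist⟩ := cut_spec f h lam δ hδ hlam hh1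
    obtain ⟨w2, hw2_0, hw2_le, hw2_ne, hw2_dist⟩ := cut_spec h f lam δ hδ hlam hf0
    -- support estimates
    have hU1 : IsOpen (G ∩ {x : Sph n | δ / 4 < h x - f x}) :=
      hG.inter (isOpen_lt continuous_const (h.continuous.sub f.continuous))
    have hU2 : IsOpen (G ∩ {x : Sph n | δ / 4 < f x - h x}) :=
      hG.inter (isOpen_lt continuous_const (f.continuous.sub h.continuous))
    have hU1sub : G ∩ {x : Sph n | δ / 4 < h x - f x} ⊆ G \ K := by
      rintro x ⟨hxG, hx⟩
      refine ⟨hxG, fun hxK => ?_⟩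
      have h1 := hfK x hxK
      have h2 := hh2 x hxK
      simp only [mem_setOf_eq] at hx
      rw [h1, h2] at hx
      linarith
    have hU2sub : G ∩ {x : Sph n | δ / 4 < f x - h x} ⊆ G \ K := by
      rintro x ⟨hxG, hx⟩
      refine ⟨hxG, fun hxK => ?_⟩
      have h1 := hfK x hxK
      have h2 := hh2 x hxK
      simp only [mem_setOf_eq] at hx
      rw [h1, h2] at hx
      linarith
    have hmono1 : (sphMeasure n (G ∩ {x : Sph n | δ / 4 < h x - f x})).toReal ≤ m' :=
      ENNReal.toReal_mono (measure_ne_top _ _) (measure_mono hU1sub)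
    have hmono2 : (sphMeasure n (G ∩ {x : Sph n | δ / 4 < f x - h x})).toReal ≤ m' :=
      ENNReal.toReal_mono (measure_ne_top _ _) (measure_mono hU2sub)
    -- tsupport of f ⊓ w1
    have hsupp1 : tsupport ⇑(f ⊓ w1) ⊆ G ∩ {x : Sph n | δ / 4 < h x - f x} := by
      have hclosed : IsClosed (tsupport ⇑f ∩ {x : Sph n | δ / 2 ≤ h x - f x}) :=
        (isClosed_tsupport _).inter (isClosed_le continuous_const
          (h.continuous.sub f.continuous))
      have hsub : Function.support ⇑(f ⊓ w1) ⊆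
          tsupport ⇑f ∩ {x : Sph n | δ / 2 ≤ h x - f x} := by
        intro x hx
        simp only [Function.mem_support, ContinuousMap.inf_apply] at hx
        have hfx : 0 ≤ f x := (hf0 x).1
        have hwx : 0 ≤ w1 x := hw1_0 x
        have hmin : 0 ≤ min (f x) (w1 x) := le_min hfx hwx
        have hmin' : 0 < min (f x) (w1 x) := lt_of_le_of_ne hmin (Ne.symm hx)
        have hfx' : 0 < f x := lt_of_lt_of_le hmin' (min_le_left _ _)
        have hwx' : 0 < w1 x := lt_of_lt_of_le hmin' (min_le_right _ _)
        obtain ⟨-, hlt⟩ := hw1_ne x (ne_of_gt hwx')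
        exact ⟨subset_closure (fun h0 => (ne_of_gt hfx') (by simpa using h0)),
          by simp only [mem_setOf_eq]; linarith⟩
      refine (closure_minimal hsub hclosed).trans ?_
      rintro x ⟨hx1, hx2⟩
      simp only [mem_setOf_eq] at hx2
      refine ⟨hfG hx1, ?_⟩
      simp only [mem_setOf_eq]
      linarith
    -- tsupport of w2
    have hsupp2 : tsupport ⇑w2 ⊆ G ∩ {x : Sph n | δ / 4 < f x - h x} := by
      have hclosed : IsClosed (tsupport ⇑f ∩ {x : Sph n | δ / 2 ≤ f x - h x}) :=
        (isClosed_tsupport _).inter (isClosed_le continuous_const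
          (f.continuous.sub h.continuous))
      have hsub : Function.support ⇑w2 ⊆
          tsupport ⇑f ∩ {x : Sph n | δ / 2 ≤ f x - h x} := by
        intro x hx
        simp only [Function.mem_support] at hx
        obtain ⟨hfx', hlt⟩ := hw2_ne x hx
        exact ⟨subset_closure (fun h0 => (ne_of_gt hfx') (by simpa using h0)),
          by simp only [mem_setOf_eq]; linarith⟩
      refine (closure_minimal hsub hclosed).trans ?_
      rintro x ⟨hx1, hx2⟩
      simp only [mem_setOf_eq] at hx2
      refine ⟨hfG hx1, ?_⟩
      simp only [mem_setOf_eq]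
      linarith
    -- bounds from hbound
    have hfw1_0 : (0 : C(Sph n, ℝ)) ≤ f ⊓ w1 := le_inf hf0' hw1_0
    have hfw1_norm : ‖f ⊓ w1‖ ≤ lam := by
      rw [ContinuousMap.norm_le _ hlam.le]
      intro x
      have h1 : 0 ≤ (f ⊓ w1) x := hfw1_0 x
      have h2 : (f ⊓ w1) x ≤ f x := by
        simp only [ContinuousMap.inf_apply]; exact min_le_left _ _
      rw [Real.norm_eq_abs, abs_of_nonneg h1]
      exact le_trans h2 (hf0 x).2
    have hw2_norm : ‖w2‖ ≤ lam := by
      rw [ContinuousMap.norm_le _ hlam.le]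
      intro x
      have h1 : 0 ≤ w2 x := hw2_0 x
      rw [Real.norm_eq_abs, abs_of_nonneg h1]
      exact le_trans (hw2_le x) (hf0 x).2
    have hb1 : V (f ⊓ w1) ≤ θlam * m' := by
      calc V (f ⊓ w1) ≤ θlam * (sphMeasure n (G ∩ {x : Sph n | δ / 4 < h x - f x})).toReal :=
            hbound _ hU1 _ hfw1_0 hfw1_norm hsupp1
      _ ≤ θlam * m' := mul_le_mul_of_nonneg_left hmono1 hθlam.le
    have hb2 : V w2 ≤ θlam * m' := by
      calc V w2 ≤ θlam * (sphMeasure n (G ∩ {x : Sph n | δ / 4 < f x - h x})).toReal :=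
            hbound _ hU2 _ hw2_0 hw2_norm hsupp2
      _ ≤ θlam * m' := mul_le_mul_of_nonneg_left hmono2 hθlam.le
    -- valuation identities
    have hid1 := hval f w1 hf0' hw1_0
    have hid2 := hval h w2 hh0 hw2_0
    have hVw1 : 0 ≤ V w1 := hpos w1 hw1_0
    have hVhw2 : 0 ≤ V (h ⊓ w2) := hpos _ (le_inf hh0 hw2_0)
    -- continuity estimates
    have hd1 : dist (f ⊔ w1) p < δ₀ := by
      have : dist (f ⊔ w1) p ≤ δ := by
        rw [ContinuousMap.dist_le hδ.le]
        intro x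
        rw [Real.dist_eq]
        exact hw1_dist x
      linarith
    have hd2 : dist (h ⊔ w2) p < δ₀ := by
      have hcomm : (h ⊔ f : C(Sph n, ℝ)) = p := sup_comm h f
      have : dist (h ⊔ w2) p ≤ δ := by
        rw [ContinuousMap.dist_le hδ.le]
        intro x
        rw [Real.dist_eq]
        have := hw2_dist x
        rw [← hcomm]
        exact this
      linarith
    have hmem1 : (f ⊔ w1 : C(Sph n, ℝ)) ∈ {g : C(Sph n, ℝ) | 0 ≤ g} :=
      le_trans hf0' le_sup_left
    have hmem2 : (h ⊔ w2 : C(Sph n, ℝ)) ∈ {g : C(Sph n, ℝ) | 0 ≤ g} :=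
      le_trans hh0 le_sup_left
    have hc1 : |V (f ⊔ w1) - V p| < ε / 8 := by
      have := Hcont hmem1 hd1
      rwa [Real.dist_eq] at this
    have hc2 : |V (h ⊔ w2) - V p| < ε / 8 := by
      have := Hcont hmem2 hd2
      rwa [Real.dist_eq] at this
    -- assemble
    have e1 : V f ≤ V (f ⊔ w1) + θlam * m' := by
      -- V (f ⊔ w1) + V (f ⊓ w1) = V f + V w1
      have habs := abs_lt.mp hc1
      linarith [hid1, hVw1, hb1]
    have e2 : V (h ⊔ w2) ≤ V h + θlam * m' := by
      linarith [hid2, hVhw2, hb2]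
    have e3 : V (f ⊔ w1) ≤ V p + ε / 8 := by
      have := abs_lt.mp hc1
      linarith
    have e4 : V p ≤ V (h ⊔ w2) + ε / 8 := by
      have := abs_lt.mp hc2
      linarith
    calc V f ≤ V (f ⊔ w1) + θlam * m' := e1
    _ ≤ V p + ε / 8 + θlam * m' := by linarith
    _ ≤ V (h ⊔ w2) + ε / 8 + ε / 8 + θlam * m' := by linarith
    _ ≤ V h + θlam * m' + ε / 8 + ε / 8 + θlam * m' := by linarith
    _ ≤ V h + ε := by linarith
  -- conclude via the infimum
  set S : Set C(Sph n, ℝ) :=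
    {g : C(Sph n, ℝ) | (∀ x, g x ∈ Set.Icc 0 lam) ∧ ∀ x ∈ K, g x = lam} with hSdef
  have hconst : (ContinuousMap.const (Sph n) lam) ∈ S := by
    constructor
    · intro x; exact ⟨hlam.le, le_refl lam⟩
    · intro x _; rfl
  have hne : (V '' S).Nonempty := ⟨V (ContinuousMap.const (Sph n) lam),
    mem_image_of_mem V hconst⟩
  have hlow : V f - ε ≤ sInf (V '' S) := by
    apply le_csInf hne
    rintro y ⟨g, hgS, rfl⟩
    have := main g hgS.1 hgS.2
    linarith
  have : zeta V lam K = sInf (V '' S) := rfl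
  rw [this]
  linarith
end
end
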